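/- arXiv:2008.06882 — 3 statements merged into one kernel-verified Lean document; each statement's English description precedes it below -/
import Mathlib

section
/- Suppose the backward-induction process V of the general discrete-time Dynkin game violates the sandwich condition at some time t < T, i.e. P({V_t < X_t ∧ Y_t} ∪ {V_t > X_t ∨ Y_t}) > 0. Then the Dynkin game GDG_t(X,Y,Z) started at time t does not admit a Nash equilibrium. -/
open MeasureTheory Filter Set

/-- Payoff of the general Dynkin game. -/
noncomputable def payoffD {Ω : Type*} (X Y Z : ℕ → Ω → ℝ) (τ σ : Ω → ℕ) (ω : Ω) : ℝ :=
  if τ ω < σ ω then X (τ ω) ω else if σ ω < τ ω then Y (σ ω) ω else Z (σ ω) ω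


set_option linter.unusedSectionVars false
set_option linter.unusedVariables false
set_option maxHeartbeats 1000000

namespace DynkinNE


lemma downward (T : ℕ) {P : ℕ → Prop} (hT : P T) (hstep : ∀ s, s < T → P (s+1) → P s) :
    ∀ s, s ≤ T → P s := by
  have h : ∀ k, k ≤ T → P (T - k) := by
    intro k
    induction k with
    | zero => intro _; simpa using hT
    | succ k ih =>
      intro hk
      have h2 : T - (k+1) + 1 = T - k := by omega
      exact hstep (T - (k+1)) (by omega) (by rw [h2]; exact ih (by omega))
  intro s hs
  have := h (T - s) (by omega)
  rwa [show T - (T - s) = s by omega] at this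

variable {Ω : Type*} {m0 : MeasurableSpace Ω} (μ : Measure Ω) [IsProbabilityMeasure μ]
  (ℱ : Filtration ℕ m0)

def NatST (τ : Ω → ℕ) : Prop := IsStoppingTime ℱ (fun ω => (τ ω : WithTop ℕ))

lemma NatST.measurableSet_le {F : Filtration ℕ m0} {τ : Ω → ℕ} (h : NatST F τ) (i : ℕ) :
    MeasurableSet[F i] {ω | τ ω ≤ i} := by
  have := h i
  simpa using this

lemma NatST.measurableSet_eq {F : Filtration ℕ m0} {τ : Ω → ℕ} (h : NatST F τ) (i : ℕ) :
    MeasurableSet[F i] {ω | τ ω = i} := by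
  have := IsStoppingTime.measurableSet_eq_of_countable h i
  simpa using this

lemma NatST.measurableSet_ge_of_countable {F : Filtration ℕ m0} {τ : Ω → ℕ} (h : NatST F τ) (i : ℕ) :
    MeasurableSet[F i] {ω | i ≤ τ ω} := by
  have := IsStoppingTime.measurableSet_ge_of_countable h i
  simpa using this

lemma stoppingTime_measurable {σs : Ω → ℕ} (hσ : NatST ℱ σs) : Measurable σs := by
  apply measurable_to_countable'
  intro y
  exact ℱ.le y _ (hσ.measurableSet_eq y)

lemma condexp_on_set_eq (s : ℕ) {A : Set Ω}
    (hA : MeasurableSet[ℱ s] A) {f g : Ω → ℝ} (hf : Integrable f μ)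
    (hgm : StronglyMeasurable[ℱ s] g) (hg : Integrable g μ)
    (hfg : ∀ ω ∈ A, f ω = g ω) :
    ∀ᵐ ω ∂μ, ω ∈ A → (μ[f|ℱ s]) ω = g ω := by
  have h1 : A.indicator f = A.indicator g := by
    funext ω
    by_cases h : ω ∈ A
    · rw [Set.indicator_of_mem h, Set.indicator_of_mem h, hfg ω h]
    · rw [Set.indicator_of_notMem h, Set.indicator_of_notMem h]
  have h2 : μ[A.indicator f|ℱ s] =ᵐ[μ] A.indicator (μ[f|ℱ s]) := condExp_indicator hf hA
  have h3 : μ[A.indicator g|ℱ s] = A.indicator g :=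
    condExp_of_stronglyMeasurable (ℱ.le s) (hgm.indicator hA) (hg.indicator (ℱ.le s _ hA))
  rw [h1, h3] at h2
  filter_upwards [h2] with ω hω hmem
  rw [Set.indicator_of_mem hmem, Set.indicator_of_mem hmem] at hω
  exact hω.symm

lemma condexp_on_set_mono (s : ℕ) {A : Set Ω}
    (hA : MeasurableSet[ℱ s] A) {f g : Ω → ℝ} (hf : Integrable f μ) (hg : Integrable g μ)
    (hfg : ∀ᵐ ω ∂μ, ω ∈ A → f ω ≤ g ω) :
    ∀ᵐ ω ∂μ, ω ∈ A → (μ[f|ℱ s]) ω ≤ (μ[g|ℱ s]) ω := by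
  have h0 : A.indicator f ≤ᵐ[μ] A.indicator g := by
    filter_upwards [hfg] with ω h
    by_cases hm' : ω ∈ A
    · rw [Set.indicator_of_mem hm', Set.indicator_of_mem hm']; exact h hm'
    · rw [Set.indicator_of_notMem hm', Set.indicator_of_notMem hm']
  have h1 := condExp_mono (m := ℱ s) (hf.indicator (ℱ.le s _ hA)) (hg.indicator (ℱ.le s _ hA)) h0
  have h2 := condExp_indicator (m := ℱ s) hf hA
  have h3 := condExp_indicator (m := ℱ s) hg hA
  filter_upwards [h1, h2, h3] with ω h1 h2 h3 hmem
  rw [h2, h3, Set.indicator_of_mem hmem, Set.indicator_of_mem hmem] at h1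
  exact h1

variable (T : ℕ) (X Y Z : ℕ → Ω → ℝ) (σs : Ω → ℕ)

noncomputable def auxS : ℕ → Ω → ℝ
  | 0 => Z T
  | (k+1) => fun ω =>
      if σs ω = T - (k+1) then max (Y (T - (k+1)) ω) (Z (T - (k+1)) ω)
      else max (X (T - (k+1)) ω) ((μ[auxS k | ℱ (T - (k+1))]) ω)

noncomputable def SS (s : ℕ) : Ω → ℝ := auxS μ ℱ T X Y Z σs (T - s)

lemma SS_of_ge {s : ℕ} (h : T ≤ s) : SS μ ℱ T X Y Z σs s = Z T := by
  rw [SS, Nat.sub_eq_zero_of_le h, auxS]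

lemma SS_of_lt {s : ℕ} (hs : s < T) : SS μ ℱ T X Y Z σs s = fun ω =>
    if σs ω = s then max (Y s ω) (Z s ω)
    else max (X s ω) ((μ[SS μ ℱ T X Y Z σs (s+1) | ℱ s]) ω) := by
  have h1 : T - s = (T - (s+1)) + 1 := by omega
  have h2 : T - ((T - (s+1)) + 1) = s := by omega
  rw [SS, h1, auxS, h2]
  rfl

lemma integrable_ite {c : ℕ} (hσ : Measurable σs) {f g : Ω → ℝ}
    (hf : Integrable f μ) (hg : Integrable g μ) :
    Integrable (fun ω => if σs ω = c then f ω else g ω) μ := by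
  have hA : MeasurableSet {ω | σs ω = c} := hσ (measurableSet_singleton c)
  have heq : (fun ω => if σs ω = c then f ω else g ω)
      = fun ω => {ω | σs ω = c}.indicator f ω + ({ω | σs ω = c}ᶜ).indicator g ω := by
    funext ω
    by_cases h : σs ω = c <;> simp [Set.indicator, h]
  rw [heq]
  exact (hf.indicator hA).add (hg.indicator hA.compl)

lemma integrable_SS (hσ : Measurable σs) (hXi : ∀ s, Integrable (X s) μ)
    (hYi : ∀ s, Integrable (Y s) μ) (hZi : ∀ s, Integrable (Z s) μ) (s : ℕ) :
    Integrable (SS μ ℱ T X Y Z σs s) μ := by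
  rw [SS]
  generalize T - s = k
  induction k with
  | zero => rw [auxS]; exact hZi T
  | succ k ih =>
    rw [auxS]
    exact integrable_ite μ σs hσ ((hYi _).sup (hZi _)) ((hXi _).sup integrable_condExp)

lemma measurable_payoffD (hXa : Adapted ℱ X) (hYa : Adapted ℱ Y) (hZa : Adapted ℱ Z)
    {τ σ : Ω → ℕ} (hτ : Measurable τ) (hσ : Measurable σ) :
    Measurable (payoffD X Y Z τ σ) := by
  have hXm : ∀ s, Measurable (X s) := fun s => (hXa s).mono (ℱ.le s) le_rfl
  have hYm : ∀ s, Measurable (Y s) := fun s => (hYa s).mono (ℱ.le s) le_rfl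
  have hZm : ∀ s, Measurable (Z s) := fun s => (hZa s).mono (ℱ.le s) le_rfl
  have hF : Measurable (fun p : Ω × (ℕ × ℕ) =>
      if p.2.1 < p.2.2 then X p.2.1 p.1 else if p.2.2 < p.2.1 then Y p.2.2 p.1
      else Z p.2.2 p.1) := by
    apply measurable_from_prod_countable_left
    rintro ⟨i, j⟩
    simp only
    split_ifs
    · exact hXm i
    · exact hYm j
    · exact hZm j
  have heq : payoffD X Y Z τ σ = fun ω => (fun p : Ω × (ℕ × ℕ) =>
      if p.2.1 < p.2.2 then X p.2.1 p.1 else if p.2.2 < p.2.1 then Y p.2.2 p.1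
      else Z p.2.2 p.1) (ω, (τ ω, σ ω)) := rfl
  rw [heq]
  exact hF.comp (measurable_id.prodMk (hτ.prodMk hσ))

lemma integrable_payoffD (hXa : Adapted ℱ X) (hYa : Adapted ℱ Y) (hZa : Adapted ℱ Z)
    (hXi : ∀ s, Integrable (X s) μ) (hYi : ∀ s, Integrable (Y s) μ)
    (hZi : ∀ s, Integrable (Z s) μ)
    {τ σ : Ω → ℕ} (hτ : Measurable τ) (hσ : Measurable σ)
    (hτT : ∀ ω, τ ω ≤ T) (hσT : ∀ ω, σ ω ≤ T) :
    Integrable (payoffD X Y Z τ σ) μ := by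
  have hB : Integrable (fun ω => ∑ s ∈ Finset.range (T+1),
      (|X s ω| + |Y s ω| + |Z s ω|)) μ :=
    integrable_finset_sum _ (fun s _ => ((hXi s).abs.add (hYi s).abs).add (hZi s).abs)
  refine hB.mono' (measurable_payoffD ℱ X Y Z hXa hYa hZa hτ hσ).aestronglyMeasurable
    (Eventually.of_forall fun ω => ?_)
  have key : ∀ i : ℕ, i ≤ T → ∀ v : ℝ, (v = X i ω ∨ v = Y i ω ∨ v = Z i ω) →
      |v| ≤ ∑ s ∈ Finset.range (T+1), (|X s ω| + |Y s ω| + |Z s ω|) := by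
    intro i hi v hv
    have h1 : |X i ω| + |Y i ω| + |Z i ω| ≤ ∑ s ∈ Finset.range (T+1),
        (|X s ω| + |Y s ω| + |Z s ω|) :=
      Finset.single_le_sum (f := fun s => |X s ω| + |Y s ω| + |Z s ω|)
        (fun s _ => by positivity) (Finset.mem_range.mpr (by omega))
    have h2 := abs_nonneg (X i ω); have h3 := abs_nonneg (Y i ω)
    have h4 := abs_nonneg (Z i ω)
    rcases hv with h | h | h <;> rw [h] <;> linarith
  rw [Real.norm_eq_abs]
  unfold payoffD
  split_ifs with h1 h2
  · exact key _ (hτT ω) _ (Or.inl rfl)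
  · exact key _ (hσT ω) _ (Or.inr (Or.inl rfl))
  · exact key _ (hσT ω) _ (Or.inr (Or.inr rfl))

def Cprop (s : ℕ) (ω : Ω) : Prop :=
  s = T ∨ (s < T ∧ ((σs ω = s ∧ Y s ω ≤ Z s ω) ∨
    (σs ω ≠ s ∧ (μ[SS μ ℱ T X Y Z σs (s+1) | ℱ s]) ω ≤ X s ω)))

noncomputable def tauhat (t : ℕ) (ω : Ω) : ℕ :=
  sInf {s | t ≤ s ∧ Cprop μ ℱ T X Y Z σs s ω}

variable {t : ℕ}

lemma tauhat_spec (tT : t ≤ T) (ω : Ω) :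
    t ≤ tauhat μ ℱ T X Y Z σs t ω ∧ Cprop μ ℱ T X Y Z σs (tauhat μ ℱ T X Y Z σs t ω) ω :=
  Nat.sInf_mem (⟨T, tT, Or.inl rfl⟩ : {s | t ≤ s ∧ Cprop μ ℱ T X Y Z σs s ω}.Nonempty)

lemma tauhat_le (tT : t ≤ T) (ω : Ω) : tauhat μ ℱ T X Y Z σs t ω ≤ T :=
  Nat.sInf_le ⟨tT, Or.inl rfl⟩

lemma tauhat_notC {s : ℕ} {ω : Ω} (hts : t ≤ s) (hlt : s < tauhat μ ℱ T X Y Z σs t ω) :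
    ¬ Cprop μ ℱ T X Y Z σs s ω :=
  fun hC => Nat.notMem_of_lt_sInf hlt ⟨hts, hC⟩

lemma measurableSet_Cprop (hσ : NatST ℱ σs)
    (hXa : Adapted ℱ X) (hYa : Adapted ℱ Y) (hZa : Adapted ℱ Z) (s : ℕ) :
    MeasurableSet[ℱ s] {ω | Cprop μ ℱ T X Y Z σs s ω} := by
  by_cases hsT : s = T
  · have : {ω | Cprop μ ℱ T X Y Z σs s ω} = univ := by
      ext ω; simp [Cprop, hsT]
    rw [this]; exact @MeasurableSet.univ _ (ℱ s)
  by_cases hsT' : s < T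
  · have : {ω | Cprop μ ℱ T X Y Z σs s ω} =
        ({ω | σs ω = s} ∩ {ω | Y s ω ≤ Z s ω}) ∪
        ({ω | σs ω = s}ᶜ ∩ {ω | (μ[SS μ ℱ T X Y Z σs (s+1) | ℱ s]) ω ≤ X s ω}) := by
      ext ω
      simp only [Cprop, hsT, hsT', mem_setOf_eq, mem_union, mem_inter_iff, mem_compl_iff,
        false_or, true_and]
    rw [this]
    refine MeasurableSet.union (MeasurableSet.inter (hσ.measurableSet_eq s) ?_)
      (MeasurableSet.inter (hσ.measurableSet_eq s).compl ?_)
    · exact measurableSet_le (hYa s) (hZa s)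
    · exact measurableSet_le stronglyMeasurable_condExp.measurable (hXa s)
  · have : {ω | Cprop μ ℱ T X Y Z σs s ω} = ∅ := by
      ext ω; simp [Cprop, hsT, hsT']
    rw [this]; exact @MeasurableSet.empty _ (ℱ s)

lemma isStoppingTime_tauhat (tT : t ≤ T) (hσ : NatST ℱ σs)
    (hXa : Adapted ℱ X) (hYa : Adapted ℱ Y) (hZa : Adapted ℱ Z) :
    NatST ℱ (tauhat μ ℱ T X Y Z σs t) := by
  intro n
  suffices hsuff : MeasurableSet[ℱ n] {ω | tauhat μ ℱ T X Y Z σs t ω ≤ n} by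
    convert hsuff using 1; ext ω; simp
  have heq : {ω | tauhat μ ℱ T X Y Z σs t ω ≤ n} =
      ⋃ s ∈ Finset.Icc t n, {ω | Cprop μ ℱ T X Y Z σs s ω} := by
    ext ω
    simp only [mem_setOf_eq, mem_iUnion, Finset.mem_Icc, exists_prop]
    constructor
    · intro h
      exact ⟨tauhat μ ℱ T X Y Z σs t ω, ⟨(tauhat_spec μ ℱ T X Y Z σs tT ω).1, h⟩,
        (tauhat_spec μ ℱ T X Y Z σs tT ω).2⟩
    · rintro ⟨s, ⟨hts, hsn⟩, hC⟩
      exact le_trans (Nat.sInf_le ⟨hts, hC⟩) hsn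
  rw [heq]
  refine MeasurableSet.biUnion (Finset.Icc t n).countable_toSet (fun s hs => ?_)
  exact ℱ.mono (Finset.mem_Icc.mp hs).2 _ (measurableSet_Cprop μ ℱ T X Y Z σs hσ hXa hYa hZa s)

lemma V_le_SS (V : ℕ → Ω → ℝ) (hσ : NatST ℱ σs)
    (hXi : ∀ s, Integrable (X s) μ) (hYi : ∀ s, Integrable (Y s) μ)
    (hZi : ∀ s, Integrable (Z s) μ)
    (hVT : ∀ᵐ ω ∂μ, V T ω = Z T ω)
    (hVae : ∀ s, s < T → ∀ᵐ ω ∂μ, V s ω = min (max (Y s ω) (Z s ω))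
      (max (min (X s ω) (Z s ω)) ((μ[V (s+1)|ℱ s]) ω)))
    (hVi : ∀ s, s ≤ T → Integrable (V s) μ) :
    ∀ s, s ≤ T → ∀ᵐ ω ∂μ, s ≤ σs ω → V s ω ≤ SS μ ℱ T X Y Z σs s ω := by
  have hσm : Measurable σs := stoppingTime_measurable ℱ hσ
  refine downward T ?_ ?_
  · rw [SS_of_ge μ ℱ T X Y Z σs le_rfl]
    filter_upwards [hVT] with ω h _
    exact le_of_eq h
  · intro s hs IH
    have hA : MeasurableSet[ℱ s] {ω | s + 1 ≤ σs ω} := by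
      have h2 : {ω | s+1 ≤ σs ω} = {ω | σs ω ≤ s}ᶜ := by
        ext ω; simp only [mem_setOf_eq, mem_compl_iff, not_le]; omega
      rw [h2]; exact (hσ.measurableSet_le s).compl
    have hmono := condexp_on_set_mono μ ℱ s hA (hVi (s+1) (by omega))
      (integrable_SS μ ℱ T X Y Z σs hσm hXi hYi hZi (s+1)) IH
    filter_upwards [hmono, hVae s hs] with ω h1 h2 hσω
    simp only [SS_of_lt μ ℱ T X Y Z σs hs]
    by_cases hc : σs ω = s
    · rw [if_pos hc, h2]; exact min_le_left _ _
    · rw [if_neg hc, h2]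
      have hω : s+1 ≤ σs ω := by omega
      exact le_trans (min_le_right _ _) (max_le_max (min_le_left _ _) (h1 hω))


lemma SS_le_payoff (tT : t ≤ T) (hσ : NatST ℱ σs)
    (hXa : Adapted ℱ X) (hYa : Adapted ℱ Y) (hZa : Adapted ℱ Z)
    (hXi : ∀ s, Integrable (X s) μ) (hYi : ∀ s, Integrable (Y s) μ)
    (hZi : ∀ s, Integrable (Z s) μ) (hσT : ∀ ω, σs ω ≤ T) :
    ∀ s, s ≤ T → t ≤ s → ∀ᵐ ω ∂μ,
      (s ≤ tauhat μ ℱ T X Y Z σs t ω ∧ s ≤ σs ω) →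
      SS μ ℱ T X Y Z σs s ω ≤ (μ[payoffD X Y Z (tauhat μ ℱ T X Y Z σs t) σs|ℱ s]) ω := by
  have hσm : Measurable σs := stoppingTime_measurable ℱ hσ
  have hτstop : NatST ℱ (tauhat μ ℱ T X Y Z σs t) :=
    isStoppingTime_tauhat μ ℱ T X Y Z σs tT hσ hXa hYa hZa
  have hτm : Measurable (tauhat μ ℱ T X Y Z σs t) := stoppingTime_measurable ℱ hτstop
  have hRi : Integrable (payoffD X Y Z (tauhat μ ℱ T X Y Z σs t) σs) μ :=
    integrable_payoffD μ ℱ T X Y Z hXa hYa hZa hXi hYi hZi hτm hσm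
      (tauhat_le μ ℱ T X Y Z σs tT) hσT
  refine downward T ?_ ?_
  · intro _
    have hA : MeasurableSet[ℱ T]
        ({ω | T ≤ tauhat μ ℱ T X Y Z σs t ω} ∩ {ω | T ≤ σs ω}) :=
      (hτstop.measurableSet_ge_of_countable T).inter (hσ.measurableSet_ge_of_countable T)
    have h0 := condexp_on_set_eq μ ℱ T hA hRi (hZa T).stronglyMeasurable (hZi T) ?_
    · filter_upwards [h0] with ω h hmem
      rw [SS_of_ge μ ℱ T X Y Z σs le_rfl, h hmem]
    · rintro ω ⟨h1, h2⟩
      simp only [mem_setOf_eq] at h1 h2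
      have e1 : tauhat μ ℱ T X Y Z σs t ω = T :=
        le_antisymm (tauhat_le μ ℱ T X Y Z σs tT ω) h1
      have e2 : σs ω = T := le_antisymm (hσT ω) h2
      unfold payoffD
      rw [e1, e2]
      simp
  · intro s hsT IH hts
    have IH' := IH (by omega)
    have hP1 : MeasurableSet[ℱ s]
        ({ω | σs ω = s} ∩ {ω | tauhat μ ℱ T X Y Z σs t ω = s}) :=
      (hσ.measurableSet_eq s).inter (hτstop.measurableSet_eq s)
    have hP2 : MeasurableSet[ℱ s]
        ({ω | σs ω = s} ∩ {ω | tauhat μ ℱ T X Y Z σs t ω ≤ s}ᶜ) :=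
      (hσ.measurableSet_eq s).inter (hτstop.measurableSet_le s).compl
    have hP3 : MeasurableSet[ℱ s]
        ({ω | tauhat μ ℱ T X Y Z σs t ω = s} ∩ {ω | σs ω ≤ s}ᶜ) :=
      (hτstop.measurableSet_eq s).inter (hσ.measurableSet_le s).compl
    have hP4 : MeasurableSet[ℱ s]
        ({ω | tauhat μ ℱ T X Y Z σs t ω ≤ s}ᶜ ∩ {ω | σs ω ≤ s}ᶜ) :=
      (hτstop.measurableSet_le s).compl.inter (hσ.measurableSet_le s).compl
    have h1 := condexp_on_set_eq μ ℱ s hP1 hRi (hZa s).stronglyMeasurable (hZi s) (fun ω hω => by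
      obtain ⟨e1, e2⟩ := hω
      simp only [mem_setOf_eq] at e1 e2
      unfold payoffD
      rw [e1, e2]
      simp)
    have h2 := condexp_on_set_eq μ ℱ s hP2 hRi (hYa s).stronglyMeasurable (hYi s) (fun ω hω => by
      obtain ⟨e1, e2⟩ := hω
      simp only [mem_setOf_eq, mem_compl_iff, not_le] at e1 e2
      unfold payoffD
      rw [if_neg (by omega), if_pos (by omega), e1])
    have h3 := condexp_on_set_eq μ ℱ s hP3 hRi (hXa s).stronglyMeasurable (hXi s) (fun ω hω => by
      obtain ⟨e1, e2⟩ := hω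
      simp only [mem_setOf_eq, mem_compl_iff, not_le] at e1 e2
      unfold payoffD
      rw [if_pos (by omega), e1])
    have h4pre : ∀ᵐ ω ∂μ, ω ∈
        ({ω | tauhat μ ℱ T X Y Z σs t ω ≤ s}ᶜ ∩ {ω | σs ω ≤ s}ᶜ) →
        SS μ ℱ T X Y Z σs (s+1) ω ≤
          (μ[payoffD X Y Z (tauhat μ ℱ T X Y Z σs t) σs|ℱ (s+1)]) ω := by
      filter_upwards [IH'] with ω h hmem
      obtain ⟨ha, hb⟩ := hmem
      simp only [mem_compl_iff, mem_setOf_eq, not_le] at ha hb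
      exact h ⟨by omega, by omega⟩
    have h4 := condexp_on_set_mono μ ℱ s hP4
      (integrable_SS μ ℱ T X Y Z σs hσm hXi hYi hZi (s+1)) integrable_condExp h4pre
    have htower := condExp_condExp_of_le
      (f := payoffD X Y Z (tauhat μ ℱ T X Y Z σs t) σs) (μ := μ)
      (ℱ.mono (Nat.le_succ s)) (ℱ.le (s+1))
    filter_upwards [h1, h2, h3, h4, htower] with ω h1 h2 h3 h4 htw hmem
    obtain ⟨hτω, hσω⟩ := hmem
    simp only [SS_of_lt μ ℱ T X Y Z σs hsT]
    by_cases hcσ : σs ω = s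
    · by_cases hcτ : tauhat μ ℱ T X Y Z σs t ω = s
      · rw [if_pos hcσ, h1 ⟨hcσ, hcτ⟩]
        have hCτ := (tauhat_spec μ ℱ T X Y Z σs tT ω).2
        rw [hcτ] at hCτ
        rcases hCτ with h | ⟨_, h⟩
        · exact absurd h (by omega)
        rcases h with ⟨_, hYZ⟩ | ⟨hne, _⟩
        · exact max_le hYZ le_rfl
        · exact absurd hcσ hne
      · have hlt : s < tauhat μ ℱ T X Y Z σs t ω := by omega
        rw [if_pos hcσ, h2 ⟨hcσ, by simp only [mem_compl_iff, mem_setOf_eq]; omega⟩]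
        have hnc := tauhat_notC μ ℱ T X Y Z σs hts hlt
        have hZY : ¬ (Y s ω ≤ Z s ω) := fun hyz =>
          hnc (Or.inr ⟨hsT, Or.inl ⟨hcσ, hyz⟩⟩)
        exact max_le le_rfl (le_of_lt (not_le.mp hZY))
    · by_cases hcτ : tauhat μ ℱ T X Y Z σs t ω = s
      · rw [if_neg hcσ, h3 ⟨hcτ, by simp only [mem_compl_iff, mem_setOf_eq]; omega⟩]
        have hCτ := (tauhat_spec μ ℱ T X Y Z σs tT ω).2
        rw [hcτ] at hCτ
        rcases hCτ with h | ⟨_, h⟩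
        · exact absurd h (by omega)
        rcases h with ⟨heq, _⟩ | ⟨_, hE⟩
        · exact absurd heq hcσ
        · exact max_le le_rfl hE
      · have hmem4 : ω ∈ ({ω | tauhat μ ℱ T X Y Z σs t ω ≤ s}ᶜ ∩ {ω | σs ω ≤ s}ᶜ) := by
          have hx1 : ¬ (tauhat μ ℱ T X Y Z σs t ω ≤ s) := by omega
          have hx2 : ¬ (σs ω ≤ s) := by omega
          exact ⟨hx1, hx2⟩
        have h4ω := h4 hmem4
        rw [htw] at h4ω
        have hlt4 : s < tauhat μ ℱ T X Y Z σs t ω := by omega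
        have hnc := tauhat_notC μ ℱ T X Y Z σs hts hlt4
        have hEX : ¬ ((μ[SS μ ℱ T X Y Z σs (s+1)|ℱ s]) ω ≤ X s ω) := fun hE =>
          hnc (Or.inr ⟨hsT, Or.inr ⟨hcσ, hE⟩⟩)
        rw [if_neg hcσ]
        exact max_le (le_trans (le_of_lt (not_le.mp hEX)) h4ω) h4ω


lemma main_le (V : ℕ → Ω → ℝ)
    (hXa : Adapted ℱ X) (hYa : Adapted ℱ Y) (hZa : Adapted ℱ Z)
    (hXi : ∀ s, Integrable (X s) μ) (hYi : ∀ s, Integrable (Y s) μ)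
    (hZi : ∀ s, Integrable (Z s) μ)
    (hVT : ∀ᵐ ω ∂μ, V T ω = Z T ω)
    (hVae : ∀ s, s < T → ∀ᵐ ω ∂μ, V s ω = min (max (Y s ω) (Z s ω))
      (max (min (X s ω) (Z s ω)) ((μ[V (s+1)|ℱ s]) ω)))
    (htT : t < T) (hσ : NatST ℱ σs) (hσI : ∀ ω, σs ω ∈ Set.Icc t T)
    (W : Ω → ℝ)
    (H : ∀ τ : Ω → ℕ, NatST ℱ τ → (∀ ω, τ ω ∈ Set.Icc t T) →
      μ[payoffD X Y Z τ σs|ℱ t] ≤ᵐ[μ] W) :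
    V t ≤ᵐ[μ] W := by
  have tT : t ≤ T := le_of_lt htT
  have hVi : ∀ s, s ≤ T → Integrable (V s) μ := by
    refine downward T ?_ ?_
    · exact (hZi T).congr (hVT.mono fun ω h => h.symm)
    · intro s hs _
      have hg : Integrable (fun ω => min (max (Y s ω) (Z s ω))
          (max (min (X s ω) (Z s ω)) ((μ[V (s+1)|ℱ s]) ω))) μ :=
        ((hYi s).sup (hZi s)).inf (((hXi s).inf (hZi s)).sup integrable_condExp)
      exact hg.congr ((hVae s hs).mono fun ω h => h.symm)
  have h1 := V_le_SS μ ℱ T X Y Z σs V hσ hXi hYi hZi hVT hVae hVi t tT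
  have h2 := SS_le_payoff μ ℱ T X Y Z σs tT hσ hXa hYa hZa hXi hYi hZi
    (fun ω => (hσI ω).2) t tT le_rfl
  have h3 := H (tauhat μ ℱ T X Y Z σs t)
    (isStoppingTime_tauhat μ ℱ T X Y Z σs tT hσ hXa hYa hZa)
    (fun ω => ⟨(tauhat_spec μ ℱ T X Y Z σs tT ω).1, tauhat_le μ ℱ T X Y Z σs tT ω⟩)
  filter_upwards [h1, h2, h3] with ω h1 h2 h3
  exact le_trans (h1 (hσI ω).1)
    (le_trans (h2 ⟨(tauhat_spec μ ℱ T X Y Z σs tT ω).1, (hσI ω).1⟩) h3)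

lemma bound_le (τs : Ω → ℕ)
    (hXa : Adapted ℱ X) (hYa : Adapted ℱ Y) (hZa : Adapted ℱ Z)
    (hXi : ∀ s, Integrable (X s) μ) (hYi : ∀ s, Integrable (Y s) μ)
    (hZi : ∀ s, Integrable (Z s) μ)
    (htT : t < T) (hτ : NatST ℱ τs) (hτI : ∀ ω, τs ω ∈ Set.Icc t T)
    (W : Ω → ℝ)
    (H : ∀ σ : Ω → ℕ, NatST ℱ σ → (∀ ω, σ ω ∈ Set.Icc t T) →
      W ≤ᵐ[μ] μ[payoffD X Y Z τs σ|ℱ t]) :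
    W ≤ᵐ[μ] fun ω => max (X t ω) (Y t ω) := by
  have tT : t ≤ T := le_of_lt htT
  have hτm := stoppingTime_measurable ℱ hτ
  have hRi1 : Integrable (payoffD X Y Z τs (fun _ => t)) μ :=
    integrable_payoffD μ ℱ T X Y Z hXa hYa hZa hXi hYi hZi hτm measurable_const
      (fun ω => (hτI ω).2) (fun _ => tT)
  have hRi2 : Integrable (payoffD X Y Z τs (fun _ => T)) μ :=
    integrable_payoffD μ ℱ T X Y Z hXa hYa hZa hXi hYi hZi hτm measurable_const
      (fun ω => (hτI ω).2) (fun _ => le_rfl)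
  have hb1 := condexp_on_set_eq μ ℱ t ((hτ.measurableSet_le t).compl) hRi1 (hYa t).stronglyMeasurable (hYi t)
    (fun ω hω => by
      simp only [mem_compl_iff, mem_setOf_eq, not_le] at hω
      show (if τs ω < t then X (τs ω) ω else if t < τs ω then Y t ω else Z t ω) = Y t ω
      rw [if_neg (by omega), if_pos (by omega)])
  have hb2 := condexp_on_set_eq μ ℱ t (hτ.measurableSet_eq t) hRi2 (hXa t).stronglyMeasurable (hXi t)
    (fun ω hω => by
      simp only [mem_setOf_eq] at hω
      show (if τs ω < T then X (τs ω) ω else if T < τs ω then Y T ω else Z T ω) = X t ω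
      rw [if_pos (by omega), hω])
  have hH1 := H (fun _ => t) (isStoppingTime_const ℱ t) (fun ω => ⟨le_rfl, tT⟩)
  have hH2 := H (fun _ => T) (isStoppingTime_const ℱ T) (fun ω => ⟨tT, le_rfl⟩)
  filter_upwards [hb1, hb2, hH1, hH2] with ω hb1 hb2 hH1 hH2
  by_cases hc : τs ω = t
  · exact le_trans hH2 (by rw [hb2 hc]; exact le_max_left _ _)
  · have hlt : ¬ τs ω ≤ t := by have := (hτI ω).1; omega
    exact le_trans hH1 (by rw [hb1 hlt]; exact le_max_right _ _)

lemma max_min_of_le {p q e : ℝ} (h : p ≤ q) : max p (min q e) = min q (max p e) := by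
  rw [max_min_distrib_left, max_eq_right h]

lemma neg_V_eq (x y z e : ℝ) :
    -(min (max y z) (max (min x z) e)) = min (max (-x) (-z)) (max (min (-y) (-z)) (-e)) := by
  have h1 : -(min (max y z) (max (min x z) e))
      = max (-(max y z)) (-(max (min x z) e)) := (max_neg_neg _ _).symm
  have h2 : -(max y z) = min (-y) (-z) := (min_neg_neg _ _).symm
  have h3 : -(max (min x z) e) = min (-(min x z)) (-e) := (min_neg_neg _ _).symm
  have h4 : -(min x z) = max (-x) (-z) := (max_neg_neg _ _).symm
  rw [h1, h2, h3, h4]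
  exact max_min_of_le (le_trans (min_le_right _ _) (le_max_right _ _))

lemma payoffD_neg (X Y Z : ℕ → Ω → ℝ) (τ σ : Ω → ℕ) :
    payoffD (fun s ω => -(Y s ω)) (fun s ω => -(X s ω)) (fun s ω => -(Z s ω)) σ τ
      = -(payoffD X Y Z τ σ) := by
  funext ω
  show _ = -(payoffD X Y Z τ σ ω)
  unfold payoffD
  rcases lt_trichotomy (σ ω) (τ ω) with h | h | h
  · rw [if_pos h, if_neg (lt_asymm h), if_pos h]
  · rw [if_neg (by omega), if_neg (by omega), if_neg (by omega), if_neg (by omega), h]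
  · rw [if_neg (lt_asymm h), if_pos h, if_pos h]


end DynkinNE

/-- If the backward-induction process `V` of the general discrete-time Dynkin game
violates the sandwich condition at some time `t < T`, i.e.
`P(V_t < X_t ∧ Y_t or V_t > X_t ∨ Y_t) > 0`, then the Dynkin game `GDG_t(X,Y,Z)`
started at time `t` does not admit a Nash equilibrium. -/
theorem stmt12 {Ω : Type*} {m0 : MeasurableSpace Ω} (μ : Measure Ω) [IsProbabilityMeasure μ]
    (ℱ : Filtration ℕ m0) (T : ℕ)
    (X Y Z V : ℕ → Ω → ℝ)
    (hXa : Adapted ℱ X) (hYa : Adapted ℱ Y) (hZa : Adapted ℱ Z)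
    (hXi : ∀ s, Integrable (X s) μ) (hYi : ∀ s, Integrable (Y s) μ)
    (hZi : ∀ s, Integrable (Z s) μ)
    (htermX : ∀ ω, X T ω = Z T ω) (htermY : ∀ ω, Y T ω = Z T ω)
    (hVT : ∀ ω, V T ω = Z T ω)
    (hV : ∀ s, s < T → ∀ ω, V s ω =
      min (max (Y s ω) (Z s ω))
        (max (min (X s ω) (Z s ω)) ((μ[V (s + 1) | ℱ s]) ω)))
    (t : ℕ) (htT : t < T)
    (hviol : 0 < μ {ω | V t ω < min (X t ω) (Y t ω) ∨ max (X t ω) (Y t ω) < V t ω}) :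
    ¬ ∃ τs σs : Ω → ℕ,
      IsStoppingTime ℱ (fun ω => (τs ω : WithTop ℕ)) ∧ IsStoppingTime ℱ (fun ω => (σs ω : WithTop ℕ)) ∧
      (∀ ω, τs ω ∈ Set.Icc t T) ∧ (∀ ω, σs ω ∈ Set.Icc t T) ∧
      ∀ τ σ : Ω → ℕ, IsStoppingTime ℱ (fun ω => (τ ω : WithTop ℕ)) → IsStoppingTime ℱ (fun ω => (σ ω : WithTop ℕ)) →
        (∀ ω, τ ω ∈ Set.Icc t T) → (∀ ω, σ ω ∈ Set.Icc t T) →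
        (μ[payoffD X Y Z τs σs | ℱ t] ≤ᵐ[μ] μ[payoffD X Y Z τs σ | ℱ t]) ∧
        (μ[payoffD X Y Z τ σs | ℱ t] ≤ᵐ[μ] μ[payoffD X Y Z τs σs | ℱ t]) := by
  rintro ⟨τs, σs, hτ, hσ, hτI, hσI, hNash⟩
  have hVTae : ∀ᵐ ω ∂μ, V T ω = Z T ω := Eventually.of_forall hVT
  have hVae : ∀ s, s < T → ∀ᵐ ω ∂μ, V s ω = min (max (Y s ω) (Z s ω))
      (max (min (X s ω) (Z s ω)) ((μ[V (s+1)|ℱ s]) ω)) :=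
    fun s hs => Eventually.of_forall (hV s hs)
  -- the equilibrium value
  -- (1) V t ≤ W a.e.
  have h1 : V t ≤ᵐ[μ] μ[payoffD X Y Z τs σs | ℱ t] :=
    DynkinNE.main_le μ ℱ T X Y Z σs V hXa hYa hZa hXi hYi hZi hVTae hVae htT hσ hσI _
      (fun τ hτ' hI => (hNash τ σs hτ' hσ hI hσI).2)
  -- (2) W ≤ max (X t) (Y t) a.e.
  have h3 : μ[payoffD X Y Z τs σs | ℱ t] ≤ᵐ[μ] fun ω => max (X t ω) (Y t ω) :=
    DynkinNE.bound_le μ ℱ T X Y Z τs hXa hYa hZa hXi hYi hZi htT hτ hτI _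
      (fun σ hσ' hI => (hNash τs σ hτ hσ' hτI hI).1)
  -- mirror data
  have hX'a : Adapted ℱ (fun s ω => -(Y s ω)) := fun s => (hYa s).neg
  have hY'a : Adapted ℱ (fun s ω => -(X s ω)) := fun s => (hXa s).neg
  have hZ'a : Adapted ℱ (fun s ω => -(Z s ω)) := fun s => (hZa s).neg
  have hX'i : ∀ s, Integrable (fun ω => -(Y s ω)) μ := fun s => (hYi s).neg
  have hY'i : ∀ s, Integrable (fun ω => -(X s ω)) μ := fun s => (hXi s).neg
  have hZ'i : ∀ s, Integrable (fun ω => -(Z s ω)) μ := fun s => (hZi s).neg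
  have hV'T : ∀ᵐ ω ∂μ, -(V T ω) = -(Z T ω) :=
    Eventually.of_forall fun ω => by rw [hVT ω]
  have hV'ae : ∀ s, s < T → ∀ᵐ ω ∂μ, -(V s ω) =
      min (max (-(X s ω)) (-(Z s ω)))
        (max (min (-(Y s ω)) (-(Z s ω))) ((μ[(fun ω => -(V (s+1) ω))|ℱ s]) ω)) := by
    intro s hs
    have hneg : μ[(fun ω => -(V (s+1) ω))|ℱ s] =ᵐ[μ] fun ω => -((μ[V (s+1)|ℱ s]) ω) :=
      condExp_neg (V (s+1)) (ℱ s)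
    filter_upwards [hneg] with ω hω
    rw [hω, hV s hs ω]
    exact DynkinNE.neg_V_eq _ _ _ _
  -- equalities between mirror payoffs and negated payoffs
  have e2 : payoffD (fun s ω => -(Y s ω)) (fun s ω => -(X s ω)) (fun s ω => -(Z s ω)) σs τs
      = -(payoffD X Y Z τs σs) := DynkinNE.payoffD_neg X Y Z τs σs
  have hn2 : μ[-(payoffD X Y Z τs σs)|ℱ t] =ᵐ[μ] -(μ[payoffD X Y Z τs σs|ℱ t]) :=
    condExp_neg _ _
  -- (1') mirror: -(V t) ≤ mirror value, i.e. W ≤ V t a.e.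
  have h2 : (fun ω => -(V t ω)) ≤ᵐ[μ]
      μ[payoffD (fun s ω => -(Y s ω)) (fun s ω => -(X s ω)) (fun s ω => -(Z s ω)) σs τs|ℱ t] := by
    refine DynkinNE.main_le μ ℱ T _ _ _ τs (fun s ω => -(V s ω)) hX'a hY'a hZ'a hX'i hY'i hZ'i
      hV'T hV'ae htT hτ hτI _ (fun σ' hσ'' hI => ?_)
    have e1 : payoffD (fun s ω => -(Y s ω)) (fun s ω => -(X s ω)) (fun s ω => -(Z s ω)) σ' τs
        = -(payoffD X Y Z τs σ') := DynkinNE.payoffD_neg X Y Z τs σ'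
    rw [e1, e2]
    have hn1 : μ[-(payoffD X Y Z τs σ')|ℱ t] =ᵐ[μ] -(μ[payoffD X Y Z τs σ'|ℱ t]) :=
      condExp_neg _ _
    have hNa := (hNash τs σ' hτ hσ'' hτI hI).1
    filter_upwards [hn1, hn2, hNa] with ω a b c
    rw [a, b]
    exact neg_le_neg c
  have h2' : μ[payoffD X Y Z τs σs|ℱ t] ≤ᵐ[μ] V t := by
    rw [e2] at h2
    filter_upwards [h2, hn2] with ω a b
    have := a
    rw [b] at this
    have h := neg_le_neg this
    simpa using h
  -- (2') mirror bound: min (X t) (Y t) ≤ W a.e.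
  have h4 : μ[payoffD (fun s ω => -(Y s ω)) (fun s ω => -(X s ω)) (fun s ω => -(Z s ω)) σs τs|ℱ t]
      ≤ᵐ[μ] fun ω => max (-(Y t ω)) (-(X t ω)) := by
    refine DynkinNE.bound_le μ ℱ T _ _ _ σs hX'a hY'a hZ'a hX'i hY'i hZ'i htT hσ hσI _
      (fun τ' hτ'' hI => ?_)
    have e1 : payoffD (fun s ω => -(Y s ω)) (fun s ω => -(X s ω)) (fun s ω => -(Z s ω)) σs τ'
        = -(payoffD X Y Z τ' σs) := DynkinNE.payoffD_neg X Y Z τ' σs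
    rw [e1, e2]
    have hn1 : μ[-(payoffD X Y Z τ' σs)|ℱ t] =ᵐ[μ] -(μ[payoffD X Y Z τ' σs|ℱ t]) :=
      condExp_neg _ _
    have hNa := (hNash τ' σs hτ'' hσ hI hσI).2
    filter_upwards [hn1, hn2, hNa] with ω a b c
    rw [a, b]
    exact neg_le_neg c
  have h4' : (fun ω => min (X t ω) (Y t ω)) ≤ᵐ[μ] μ[payoffD X Y Z τs σs|ℱ t] := by
    rw [e2] at h4
    filter_upwards [h4, hn2] with ω a b
    rw [b] at a
    have h := neg_le_neg a
    simp only [Pi.neg_apply, neg_neg] at h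
    have : -max (-(Y t ω)) (-(X t ω)) = min (Y t ω) (X t ω) := by
      rw [max_neg_neg, neg_neg]
    rw [this] at h
    rw [min_comm] at h
    exact h
  -- combine
  have hfin : ∀ᵐ ω ∂μ, min (X t ω) (Y t ω) ≤ V t ω ∧ V t ω ≤ max (X t ω) (Y t ω) := by
    filter_upwards [h1, h2', h3, h4'] with ω a b c d
    exact ⟨le_trans d b, le_trans a c⟩
  have h0 : μ {ω | V t ω < min (X t ω) (Y t ω) ∨ max (X t ω) (Y t ω) < V t ω} = 0 := by
    refine measure_mono_null ?_ (ae_iff.mp hfin)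
    intro ω hω
    simp only [mem_setOf_eq] at hω ⊢
    rcases hω with h | h
    · exact fun hc => absurd hc.1 (not_le.mpr h)
    · exact fun hc => absurd hc.2 (not_le.mpr h)
  rw [h0] at hviol
  exact lt_irrefl 0 hviol
end

section
/- (Main discrete-time theorem) Let X, Y, Z be adapted integrable processes on {0,...,T} with X_T = Y_T = Z_T, L = X ∧ Z, U = Y ∨ Z, and V defined by V_T = Z_T, V_t = min{U_t, max{L_t, E[V_{t+1}|F_t]}}. Then the inequality X_t ∧ Y_t ≤ V_t ≤ X_t ∨ Y_t holds for all t = 0,...,T if and only if the Dynkin game GDG_t(X,Y,Z) has a Nash equilibrium for every t = 0,...,T. -/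
open MeasureTheory Filter Set

namespace MeasureTheory.IsStoppingTime

variable {Ω : Type*} {m0 : MeasurableSpace Ω} {ℱ : Filtration ℕ m0}

lemma measurableSet_le_nat {τ : Ω → ℕ} (hτ : IsStoppingTime ℱ (fun ω => (τ ω : WithTop ℕ)))
    (n : ℕ) : MeasurableSet[ℱ n] {ω | τ ω ≤ n} := by
  simpa using hτ n

lemma measurableSet_eq_nat {τ : Ω → ℕ} (hτ : IsStoppingTime ℱ (fun ω => (τ ω : WithTop ℕ)))
    (n : ℕ) : MeasurableSet[ℱ n] {ω | τ ω = n} := by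
  simpa using hτ.measurableSet_eq n

lemma measurableSet_ge_nat {τ : Ω → ℕ} (hτ : IsStoppingTime ℱ (fun ω => (τ ω : WithTop ℕ)))
    (n : ℕ) : MeasurableSet[ℱ n] {ω | n ≤ τ ω} := by
  simpa using hτ.measurableSet_ge n

lemma measurableSet_gt_nat {τ : Ω → ℕ} (hτ : IsStoppingTime ℱ (fun ω => (τ ω : WithTop ℕ)))
    (n : ℕ) : MeasurableSet[ℱ n] {ω | n < τ ω} := by
  simpa using hτ.measurableSet_gt n

end MeasureTheory.IsStoppingTime

section NatST

variable {Ω : Type*} {m0 : MeasurableSpace Ω} {ℱ : Filtration ℕ m0}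

lemma isStoppingTime_nat_of {τ : Ω → ℕ} (h : ∀ n, MeasurableSet[ℱ n] {ω | τ ω ≤ n}) :
    IsStoppingTime ℱ (fun ω => (τ ω : WithTop ℕ)) := by
  intro n
  simpa using h n

lemma isStoppingTime_const_nat (ℱ : Filtration ℕ m0) (i : ℕ) :
    IsStoppingTime ℱ (fun _ : Ω => (i : WithTop ℕ)) :=
  isStoppingTime_nat_of (τ := fun _ => i) (fun _ => MeasurableSet.const _)

lemma MeasureTheory.IsStoppingTime.max_nat {τ π : Ω → ℕ}
    (hτ : IsStoppingTime ℱ (fun ω => (τ ω : WithTop ℕ)))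
    (hπ : IsStoppingTime ℱ (fun ω => (π ω : WithTop ℕ))) :
    IsStoppingTime ℱ (fun ω => (max (τ ω) (π ω) : WithTop ℕ)) :=
  isStoppingTime_nat_of (τ := fun ω => max (τ ω) (π ω)) (fun n => by
    have := (hτ.measurableSet_le_nat n).inter (hπ.measurableSet_le_nat n)
    simpa [max_le_iff, Set.setOf_and] using this)

end NatST

section Aux

variable {Ω : Type*} {m0 : MeasurableSpace Ω} {μ : Measure Ω}
  {ℱ : Filtration ℕ m0}

/-- A ℕ-valued stopping time is measurable. -/
lemma st_measurable {τ : Ω → ℕ} (hτ : IsStoppingTime ℱ (fun ω => (τ ω : WithTop ℕ))) : Measurable τ := by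
  apply measurable_to_countable'
  intro n
  exact ℱ.le n _ (hτ.measurableSet_eq_nat n)

lemma measurable_eval {X : ℕ → Ω → ℝ} {τ : Ω → ℕ} (T : ℕ)
    (hX : ∀ s, Measurable (X s)) (hτ : Measurable τ) (hb : ∀ ω, τ ω ≤ T) :
    Measurable fun ω => X (τ ω) ω := by
  have h : (fun ω => X (τ ω) ω) =
      fun ω => ∑ s ∈ Finset.range (T + 1), if τ ω = s then X s ω else 0 := by
    funext ω
    rw [Finset.sum_ite_eq (Finset.range (T+1)) (τ ω) (fun s => X s ω)]
    simp [Nat.lt_succ_of_le (hb ω)]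
  rw [h]
  apply Finset.measurable_sum
  intro s _
  exact Measurable.ite (hτ (measurableSet_singleton s)) (hX s) measurable_const

lemma payoff_measurable {X Y Z : ℕ → Ω → ℝ} {τ σ : Ω → ℕ} (T : ℕ)
    (hX : ∀ s, Measurable (X s)) (hY : ∀ s, Measurable (Y s)) (hZ : ∀ s, Measurable (Z s))
    (hτ : Measurable τ) (hσ : Measurable σ)
    (hbτ : ∀ ω, τ ω ≤ T) (hbσ : ∀ ω, σ ω ≤ T) :
    Measurable (payoffD X Y Z τ σ) := by
  unfold payoffD
  refine Measurable.ite (measurableSet_lt hτ hσ) (measurable_eval T hX hτ hbτ) ?_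
  exact Measurable.ite (measurableSet_lt hσ hτ) (measurable_eval T hY hσ hbσ)
    (measurable_eval T hZ hσ hbσ)

lemma payoff_integrable [IsProbabilityMeasure μ] {X Y Z : ℕ → Ω → ℝ} {τ σ : Ω → ℕ} (T : ℕ)
    (hXa : Adapted ℱ X) (hYa : Adapted ℱ Y) (hZa : Adapted ℱ Z)
    (hXi : ∀ s, Integrable (X s) μ) (hYi : ∀ s, Integrable (Y s) μ)
    (hZi : ∀ s, Integrable (Z s) μ)
    (hτ : Measurable τ) (hσ : Measurable σ)
    (hbτ : ∀ ω, τ ω ≤ T) (hbσ : ∀ ω, σ ω ≤ T) :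
    Integrable (payoffD X Y Z τ σ) μ := by
  have hXm : ∀ s, Measurable (X s) := fun s => ((hXa s)).mono (ℱ.le s) le_rfl
  have hYm : ∀ s, Measurable (Y s) := fun s => ((hYa s)).mono (ℱ.le s) le_rfl
  have hZm : ∀ s, Measurable (Z s) := fun s => ((hZa s)).mono (ℱ.le s) le_rfl
  set G : Ω → ℝ := fun ω => ∑ s ∈ Finset.range (T + 1), (|X s ω| + |Y s ω| + |Z s ω|) with hG
  have hGi : Integrable G μ := by
    apply integrable_finset_sum
    intro s _
    exact (((hXi s).abs.add (hYi s).abs).add (hZi s).abs)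
  refine Integrable.mono' hGi (payoff_measurable T hXm hYm hZm hτ hσ hbτ hbσ).aestronglyMeasurable
    (Filter.Eventually.of_forall fun ω => ?_)
  have hterm : ∀ s, s ≤ T → |X s ω| + |Y s ω| + |Z s ω| ≤ G ω := by
    intro s hs
    apply Finset.single_le_sum (f := fun s => |X s ω| + |Y s ω| + |Z s ω|)
      (fun i _ => by positivity) (Finset.mem_range.2 (Nat.lt_succ_of_le hs))
  unfold payoffD
  split_ifs with h1 h2
  · refine le_trans ?_ (hterm _ (hbτ ω))
    have := abs_nonneg (Y (τ ω) ω); have := abs_nonneg (Z (τ ω) ω)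
    simp only [Real.norm_eq_abs]; linarith
  · refine le_trans ?_ (hterm _ (hbσ ω))
    have := abs_nonneg (X (σ ω) ω); have := abs_nonneg (Z (σ ω) ω)
    simp only [Real.norm_eq_abs]; linarith
  · refine le_trans ?_ (hterm _ (hbσ ω))
    have := abs_nonneg (X (σ ω) ω); have := abs_nonneg (Y (σ ω) ω)
    simp only [Real.norm_eq_abs]; linarith

end Aux
section Hit

variable {Ω : Type*} {m0 : MeasurableSpace Ω} {μ : Measure Ω}
  {ℱ : Filtration ℕ m0}

lemma hit_exists (V X Z : ℕ → Ω → ℝ) (T t : ℕ) (ω : Ω) :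
    ∃ s, t ≤ s ∧ (T ≤ s ∨ V s ω ≤ min (X s ω) (Z s ω)) :=
  ⟨max t T, le_max_left _ _, Or.inl (le_max_right _ _)⟩

/-- First time in `[t, ∞)` (cut off at `T`) where `V ≤ X ⊓ Z`. -/
noncomputable def hitTime (V X Z : ℕ → Ω → ℝ) (T t : ℕ) (ω : Ω) : ℕ :=
  Nat.find (hit_exists V X Z T t ω)

variable {V X Z : ℕ → Ω → ℝ} {T t : ℕ}

lemma hitTime_ge (ω : Ω) : t ≤ hitTime V X Z T t ω :=
  (Nat.find_spec (hit_exists V X Z T t ω)).1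

lemma hitTime_le (ht : t ≤ T) (ω : Ω) : hitTime V X Z T t ω ≤ T :=
  Nat.find_le ⟨ht, Or.inl le_rfl⟩

lemma hitTime_spec (ω : Ω) :
    T ≤ hitTime V X Z T t ω ∨
      V (hitTime V X Z T t ω) ω ≤ min (X (hitTime V X Z T t ω) ω) (Z (hitTime V X Z T t ω) ω) :=
  (Nat.find_spec (hit_exists V X Z T t ω)).2

lemma hitTime_min {ω : Ω} {s : ℕ} (hts : t ≤ s) (hlt : s < hitTime V X Z T t ω) :
    s < T ∧ min (X s ω) (Z s ω) < V s ω := by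
  have := Nat.find_min (hit_exists V X Z T t ω) hlt
  push_neg at this
  exact this hts

lemma hitTime_isStoppingTime (ht : t ≤ T)
    (hVmeas : ∀ s, s ≤ T → StronglyMeasurable[ℱ s] (V s))
    (hXa : Adapted ℱ X) (hZa : Adapted ℱ Z) :
    IsStoppingTime ℱ (fun ω => (hitTime V X Z T t ω : WithTop ℕ)) := by
  refine isStoppingTime_nat_of (fun n => ?_)
  have : {ω | hitTime V X Z T t ω ≤ n} =
      ⋃ s ∈ Finset.range (n+1), {ω | t ≤ s ∧ (T ≤ s ∨ V s ω ≤ min (X s ω) (Z s ω))} := by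
    ext ω
    simp only [Set.mem_setOf_eq, Set.mem_iUnion, Finset.mem_range, Nat.lt_succ_iff]
    constructor
    · intro h
      exact ⟨_, h, Nat.find_spec (hit_exists V X Z T t ω)⟩
    · rintro ⟨s, hs, hp⟩
      exact le_trans (Nat.find_le hp) hs
  rw [this]
  apply MeasurableSet.biUnion (Finset.range (n+1)).countable_toSet
  intro s hs
  have hs' : s ≤ n := Nat.lt_succ_iff.mp (Finset.mem_range.mp hs)
  by_cases hst : t ≤ s
  · by_cases hsT : T ≤ s
    · have : {ω : Ω | t ≤ s ∧ (T ≤ s ∨ V s ω ≤ min (X s ω) (Z s ω))} = Set.univ := by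
        ext ω; simp [hst, hsT]
      rw [this]; exact @MeasurableSet.univ _ (ℱ n)
    · have : {ω : Ω | t ≤ s ∧ (T ≤ s ∨ V s ω ≤ min (X s ω) (Z s ω))}
          = {ω | V s ω ≤ min (X s ω) (Z s ω)} := by
        ext ω; simp [hst, hsT]
      rw [this]
      refine ℱ.mono hs' _ ?_
      have hsT' : s ≤ T := by omega
      letI : MeasurableSpace Ω := ℱ s
      exact measurableSet_le (hVmeas s hsT').measurable
        ((hXa s).min (hZa s))
  · have : {ω : Ω | t ≤ s ∧ (T ≤ s ∨ V s ω ≤ min (X s ω) (Z s ω))} = ∅ := by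
      ext ω; simp [hst]
    rw [this]; exact @MeasurableSet.empty _ (ℱ n)

end Hit
section CE

variable {Ω : Type*} {m0 : MeasurableSpace Ω} {μ : Measure Ω} [IsProbabilityMeasure μ]
  {ℱ : Filtration ℕ m0}

/-- Conditional expectation comparison localized to an `ℱ t`-measurable set. -/
lemma condExp_mono_on {t : ℕ} {B : Set Ω} {f g : Ω → ℝ}
    (hB : MeasurableSet[ℱ t] B) (hf : Integrable f μ) (hg : Integrable g μ)
    (h : ∀ᵐ ω ∂μ, ω ∈ B → f ω ≤ g ω) :
    ∀ᵐ ω ∂μ, ω ∈ B → (μ[f|ℱ t]) ω ≤ (μ[g|ℱ t]) ω := by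
  have hind : B.indicator f ≤ᵐ[μ] B.indicator g := by
    filter_upwards [h] with ω hω
    by_cases hmem : ω ∈ B
    · rw [Set.indicator_of_mem hmem, Set.indicator_of_mem hmem]; exact hω hmem
    · rw [Set.indicator_of_notMem hmem, Set.indicator_of_notMem hmem]
  have h1 : μ[B.indicator f|ℱ t] ≤ᵐ[μ] μ[B.indicator g|ℱ t] :=
    condExp_mono (hf.indicator (ℱ.le t _ hB)) (hg.indicator (ℱ.le t _ hB)) hind
  have h2 := condExp_indicator (μ := μ) hf hB
  have h3 := condExp_indicator (μ := μ) hg hB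
  filter_upwards [h1, h2, h3] with ω e1 e2 e3 hmem
  rw [e2, e3, Set.indicator_of_mem hmem, Set.indicator_of_mem hmem] at e1
  exact e1

lemma condexp_congr_on {t : ℕ} {B : Set Ω} {f g : Ω → ℝ}
    (hB : MeasurableSet[ℱ t] B) (hf : Integrable f μ) (hg : Integrable g μ)
    (h : ∀ᵐ ω ∂μ, ω ∈ B → f ω = g ω) :
    ∀ᵐ ω ∂μ, ω ∈ B → (μ[f|ℱ t]) ω = (μ[g|ℱ t]) ω := by
  have h1 := condExp_mono_on hB hf hg (by filter_upwards [h] with ω hω hm; exact (hω hm).le)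
  have h2 := condExp_mono_on hB hg hf (by filter_upwards [h] with ω hω hm; exact (hω hm).ge)
  filter_upwards [h1, h2] with ω e1 e2 hmem
  exact le_antisymm (e1 hmem) (e2 hmem)

/-- Tower + monotonicity. -/
lemma tower_mono {n : ℕ} {f : Ω → ℝ} {R : Ω → ℝ}
    (hf : Integrable f μ) (hR : Integrable R μ)
    (h : f ≤ᵐ[μ] μ[R|ℱ (n+1)]) :
    μ[f|ℱ n] ≤ᵐ[μ] μ[R|ℱ n] := by
  have h1 : μ[f|ℱ n] ≤ᵐ[μ] μ[μ[R|ℱ (n+1)]|ℱ n] :=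
    condExp_mono hf integrable_condExp h
  have h2 : μ[μ[R|ℱ (n+1)]|ℱ n] =ᵐ[μ] μ[R|ℱ n] :=
    condExp_condExp_of_le (ℱ.mono (Nat.le_succ n)) (ℱ.le (n+1))
  filter_upwards [h1, h2] with ω e1 e2
  rw [← e2]; exact e1

lemma tower_mono' {n : ℕ} {f : Ω → ℝ} {R : Ω → ℝ}
    (hf : Integrable f μ) (hR : Integrable R μ)
    (h : (μ[R|ℱ (n+1)]) ≤ᵐ[μ] f) :
    μ[R|ℱ n] ≤ᵐ[μ] μ[f|ℱ n] := by
  have h1 : μ[μ[R|ℱ (n+1)]|ℱ n] ≤ᵐ[μ] μ[f|ℱ n] :=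
    condExp_mono integrable_condExp hf h
  have h2 : μ[μ[R|ℱ (n+1)]|ℱ n] =ᵐ[μ] μ[R|ℱ n] :=
    condExp_condExp_of_le (ℱ.mono (Nat.le_succ n)) (ℱ.le (n+1))
  filter_upwards [h1, h2] with ω e1 e2
  rw [← e2]; exact e1

end CE
section Key

variable {Ω : Type*} {m0 : MeasurableSpace Ω} (μ : Measure Ω) [IsProbabilityMeasure μ]
  (ℱ : Filtration ℕ m0)

lemma keyGE (T : ℕ) (X Y Z V : ℕ → Ω → ℝ)
    (hXa : Adapted ℱ X) (hYa : Adapted ℱ Y) (hZa : Adapted ℱ Z)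
    (hXi : ∀ s, Integrable (X s) μ) (hYi : ∀ s, Integrable (Y s) μ)
    (hZi : ∀ s, Integrable (Z s) μ)
    (hVmeas : ∀ s, s ≤ T → StronglyMeasurable[ℱ s] (V s))
    (hVint : ∀ s, s ≤ T → Integrable (V s) μ)
    (hVT : ∀ ω, V T ω = Z T ω)
    (hVrec : ∀ s, s < T → ∀ᵐ ω ∂μ, V s ω =
      min (max (Y s ω) (Z s ω)) (max (min (X s ω) (Z s ω)) ((μ[V (s + 1) | ℱ s]) ω)))
    (t : ℕ) (ht : t ≤ T)
    (hsand : ∀ s, t ≤ s → s ≤ T → ∀ᵐ ω ∂μ,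
      min (X s ω) (Y s ω) ≤ V s ω ∧ V s ω ≤ max (X s ω) (Y s ω))
    (σ : Ω → ℕ) (hσ : IsStoppingTime ℱ (fun ω => (σ ω : WithTop ℕ))) (hσr : ∀ ω, σ ω ∈ Set.Icc t T) :
    ∀ n, t ≤ n → n ≤ T →
      ∀ᵐ ω ∂μ, (n ≤ hitTime V X Z T t ω ∧ n ≤ σ ω) →
        V n ω ≤ (μ[payoffD X Y Z (hitTime V X Z T t) σ | ℱ n]) ω := by
  set τh := hitTime V X Z T t with hτh
  have hτst : IsStoppingTime ℱ (fun ω => (τh ω : WithTop ℕ)) := hitTime_isStoppingTime ht hVmeas hXa hZa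
  have hτm : Measurable τh := st_measurable hτst
  have hσm : Measurable σ := st_measurable hσ
  have hτle : ∀ ω, τh ω ≤ T := fun ω => hitTime_le ht ω
  have hσle : ∀ ω, σ ω ≤ T := fun ω => (hσr ω).2
  set R := payoffD X Y Z τh σ with hR
  have hRint : Integrable R μ :=
    payoff_integrable T hXa hYa hZa hXi hYi hZi hτm hσm hτle hσle
  -- base case n = T
  have Hbase : ∀ᵐ ω ∂μ, (T ≤ τh ω ∧ T ≤ σ ω) → V T ω ≤ (μ[R|ℱ T]) ω := by
    have hB : MeasurableSet[ℱ T] {ω | T ≤ τh ω ∧ T ≤ σ ω} :=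
      (hτst.measurableSet_ge_nat T).inter (hσ.measurableSet_ge_nat T)
    have hEq : ∀ᵐ ω ∂μ, ω ∈ {ω | T ≤ τh ω ∧ T ≤ σ ω} →
        (μ[R|ℱ T]) ω = (μ[V T|ℱ T]) ω := by
      apply condexp_congr_on hB hRint (hVint T le_rfl)
      apply Filter.Eventually.of_forall
      intro ω hω
      have h1 : τh ω = T := le_antisymm (hτle ω) hω.1
      have h2 : σ ω = T := le_antisymm (hσle ω) hω.2
      rw [hR]
      unfold payoffD
      rw [h1, h2]
      simp [hVT ω]
    have hVTce : μ[V T|ℱ T] =ᵐ[μ] V T := by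
      rw [condExp_of_stronglyMeasurable (ℱ.le T) (hVmeas T le_rfl) (hVint T le_rfl)]
    filter_upwards [hEq, hVTce] with ω e1 e2 hmem
    rw [e1 hmem, e2]
  suffices H : ∀ k n, t ≤ n → n ≤ T → T - n ≤ k →
      (∀ᵐ ω ∂μ, (n ≤ τh ω ∧ n ≤ σ ω) → V n ω ≤ (μ[R | ℱ n]) ω) by
    intro n h1 h2; exact H (T - n) n h1 h2 le_rfl
  intro k
  induction k with
  | zero =>
    intro n htn hnT hk
    have hnT' : n = T := by omega
    subst hnT'; exact Hbase
  | succ k ih =>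
    intro n htn hnT hk
    by_cases hnT' : n = T
    · subst hnT'; exact Hbase
    have hnT2 : n < T := lt_of_le_of_ne hnT hnT'
    have ihn1 := ih (n+1) (by omega) (by omega) (by omega)
    have hVnce : μ[V n|ℱ n] =ᵐ[μ] V n := by
      rw [condExp_of_stronglyMeasurable (ℱ.le n) (hVmeas n hnT) (hVint n hnT)]
    -- the three pieces
    set S1 : Set Ω := {ω | τh ω = n ∧ n ≤ σ ω} with hS1def
    set S2 : Set Ω := {ω | n < τh ω ∧ σ ω = n} with hS2def
    set S3 : Set Ω := {ω | n < τh ω ∧ n < σ ω} with hS3def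
    have hS1 : MeasurableSet[ℱ n] S1 := (hτst.measurableSet_eq_nat n).inter (hσ.measurableSet_ge_nat n)
    have hS2 : MeasurableSet[ℱ n] S2 := (hτst.measurableSet_gt_nat n).inter (hσ.measurableSet_eq_nat n)
    have hS3 : MeasurableSet[ℱ n] S3 := (hτst.measurableSet_gt_nat n).inter (hσ.measurableSet_gt_nat n)
    -- Piece 1 : τh = n
    have A1 : ∀ᵐ ω ∂μ, ω ∈ S1 → (μ[V n|ℱ n]) ω ≤ (μ[R|ℱ n]) ω := by
      apply condExp_mono_on hS1 (hVint n hnT) hRint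
      apply Filter.Eventually.of_forall
      intro ω hω
      obtain ⟨h1, h2⟩ := hω
      have hVle : V n ω ≤ min (X n ω) (Z n ω) := by
        have := hitTime_spec (V := V) (X := X) (Z := Z) (T := T) (t := t) ω
        rw [← hτh] at this
        rcases this with h | h
        · omega
        · rwa [h1] at h
      rw [hR]; unfold payoffD
      rcases lt_or_eq_of_le h2 with h3 | h3
      · rw [h1, if_pos h3]
        exact le_trans hVle (min_le_left _ _)
      · rw [h1, ← h3, if_neg (lt_irrefl n), if_neg (lt_irrefl n)]
        exact le_trans hVle (min_le_right _ _)
    -- Piece 2 : σ = n < τh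
    have A2 : ∀ᵐ ω ∂μ, ω ∈ S2 → (μ[V n|ℱ n]) ω ≤ (μ[R|ℱ n]) ω := by
      apply condExp_mono_on hS2 (hVint n hnT) hRint
      filter_upwards [hsand n htn hnT, hVrec n hnT2] with ω hsw hrw hω
      obtain ⟨h1, h2⟩ := hω
      have hmin : min (X n ω) (Z n ω) < V n ω := (hitTime_min htn h1).2
      have hRω : R ω = Y n ω := by
        rw [hR]; unfold payoffD
        have hlt : ¬ τh ω < σ ω := by omega
        have hlt2 : σ ω < τh ω := by omega
        rw [if_neg hlt, if_pos hlt2, h2]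
      rw [hRω]
      by_contra hcon
      push_neg at hcon
      have hX : V n ω ≤ X n ω := by
        rcases le_max_iff.mp hsw.2 with h | h
        · exact h
        · exact absurd h (not_le_of_gt hcon)
      have hZ : V n ω ≤ Z n ω := by
        have hU : V n ω ≤ max (Y n ω) (Z n ω) := by rw [hrw]; exact min_le_left _ _
        rcases le_max_iff.mp hU with h | h
        · exact absurd h (not_le_of_gt hcon)
        · exact h
      have h5 : V n ω ≤ min (X n ω) (Z n ω) := le_min hX hZ
      exact absurd h5 (not_le_of_gt hmin)
    -- Piece 3 : n < τh and n < σ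
    have A3 : ∀ᵐ ω ∂μ, ω ∈ S3 → V n ω ≤ (μ[R|ℱ n]) ω := by
      have c1 : ∀ᵐ ω ∂μ, ω ∈ S3 →
          (μ[V (n+1)|ℱ n]) ω ≤ (μ[μ[R|ℱ (n+1)]|ℱ n]) ω := by
        apply condExp_mono_on hS3 (hVint (n+1) (by omega)) integrable_condExp
        filter_upwards [ihn1] with ω hw hω
        exact hw ⟨hω.1, hω.2⟩
      have c2 : μ[μ[R|ℱ (n+1)]|ℱ n] =ᵐ[μ] μ[R|ℱ n] :=
        condExp_condExp_of_le (ℱ.mono (Nat.le_succ n)) (ℱ.le (n+1))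
      filter_upwards [c1, c2, hVrec n hnT2] with ω e1 e2 hrw hω
      have h1 : min (X n ω) (Z n ω) < V n ω := (hitTime_min htn hω.1).2
      have h2 : V n ω ≤ (μ[V (n+1)|ℱ n]) ω := by
        have hle : V n ω ≤ max (min (X n ω) (Z n ω)) ((μ[V (n+1)|ℱ n]) ω) := by
          rw [hrw]; exact min_le_right _ _
        rcases le_max_iff.mp hle with h | h
        · exact absurd h (not_le_of_gt h1)
        · exact h
      calc V n ω ≤ (μ[V (n+1)|ℱ n]) ω := h2
        _ ≤ (μ[μ[R|ℱ (n+1)]|ℱ n]) ω := e1 hω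
        _ = (μ[R|ℱ n]) ω := e2
    -- combine
    filter_upwards [A1, A2, A3, hVnce] with ω a1 a2 a3 hv hmem
    obtain ⟨h1, h2⟩ := hmem
    rcases eq_or_lt_of_le h1 with hτ | hτ
    · rw [← hv]; exact a1 ⟨hτ.symm, h2⟩
    · rcases eq_or_lt_of_le h2 with hσ2 | hσ2
      · rw [← hv]; exact a2 ⟨hτ, hσ2.symm⟩
      · exact a3 ⟨hτ, hσ2⟩
end Key
section Dual

variable {Ω : Type*} {m0 : MeasurableSpace Ω}

/-- Pointwise negation of a process. -/
noncomputable def negP (W : ℕ → Ω → ℝ) : ℕ → Ω → ℝ := fun s => -W s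

lemma negP_apply (W : ℕ → Ω → ℝ) (s : ℕ) (ω : Ω) : negP W s ω = -(W s ω) := rfl

lemma min_max_comm {a b e : ℝ} (h : a ≤ b) : min b (max a e) = max a (min b e) := by
  rcases le_total e a with h1 | h1
  · rw [max_eq_left h1, min_eq_right h, min_eq_right (h1.trans h), max_eq_left h1]
  · rcases le_total e b with h2 | h2
    · rw [max_eq_right h1, min_eq_right h2, max_eq_right h1]
    · rw [max_eq_right h1, min_eq_left h2, max_eq_right h]

lemma payoffD_dual (X Y Z : ℕ → Ω → ℝ) (a b : Ω → ℕ) :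
    payoffD (negP Y) (negP X) (negP Z) a b = fun ω => -(payoffD X Y Z b a ω) := by
  funext ω
  unfold payoffD
  rcases lt_trichotomy (a ω) (b ω) with h | h | h
  · rw [if_pos h, if_neg (by omega : ¬ b ω < a ω), if_pos h, negP_apply]
  · rw [if_neg (by omega : ¬ a ω < b ω), if_neg (by omega : ¬ b ω < a ω),
      if_neg (by omega : ¬ b ω < a ω), if_neg (by omega : ¬ a ω < b ω), negP_apply, h]
  · rw [if_neg (by omega : ¬ a ω < b ω), if_pos h, if_pos h, negP_apply]

variable (μ : Measure Ω) [IsProbabilityMeasure μ] (ℱ : Filtration ℕ m0)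

lemma keyLE (T : ℕ) (X Y Z V : ℕ → Ω → ℝ)
    (hXa : Adapted ℱ X) (hYa : Adapted ℱ Y) (hZa : Adapted ℱ Z)
    (hXi : ∀ s, Integrable (X s) μ) (hYi : ∀ s, Integrable (Y s) μ)
    (hZi : ∀ s, Integrable (Z s) μ)
    (hVmeas : ∀ s, s ≤ T → StronglyMeasurable[ℱ s] (V s))
    (hVint : ∀ s, s ≤ T → Integrable (V s) μ)
    (hVT : ∀ ω, V T ω = Z T ω)
    (hVrec : ∀ s, s < T → ∀ᵐ ω ∂μ, V s ω =
      min (max (Y s ω) (Z s ω)) (max (min (X s ω) (Z s ω)) ((μ[V (s + 1) | ℱ s]) ω)))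
    (t : ℕ) (ht : t ≤ T)
    (hsand : ∀ s, t ≤ s → s ≤ T → ∀ᵐ ω ∂μ,
      min (X s ω) (Y s ω) ≤ V s ω ∧ V s ω ≤ max (X s ω) (Y s ω))
    (τ : Ω → ℕ) (hτ : IsStoppingTime ℱ (fun ω => (τ ω : WithTop ℕ))) (hτr : ∀ ω, τ ω ∈ Set.Icc t T) :
    ∀ n, t ≤ n → n ≤ T →
      ∀ᵐ ω ∂μ, (n ≤ hitTime (negP V) (negP Y) (negP Z) T t ω ∧ n ≤ τ ω) →
        (μ[payoffD X Y Z τ (hitTime (negP V) (negP Y) (negP Z) T t) | ℱ n]) ω ≤ V n ω := by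
  have hmain := keyGE μ ℱ T (negP Y) (negP X) (negP Z) (negP V)
    (fun s => (hYa s).neg) (fun s => (hXa s).neg) (fun s => (hZa s).neg)
    (fun s => (hYi s).neg) (fun s => (hXi s).neg) (fun s => (hZi s).neg)
    (fun s hs => (hVmeas s hs).neg) (fun s hs => (hVint s hs).neg)
    (fun ω => by simp only [negP_apply, hVT ω])
    (fun s hs => by
      filter_upwards [hVrec s hs, condExp_neg (μ := μ) (m := ℱ s) (V (s+1))] with ω h hn
      have hn' : (μ[negP V (s+1)|ℱ s]) ω = -((μ[V (s+1)|ℱ s]) ω) := by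
        have : negP V (s+1) = -V (s+1) := rfl
        rw [this, hn]; rfl
      simp only [negP_apply, hn', h]
      rw [max_neg_neg, min_neg_neg, max_neg_neg, min_neg_neg, neg_inj]
      exact min_max_comm (le_trans (min_le_right _ _) (le_max_right _ _)))
    t ht
    (fun s h1 h2 => by
      filter_upwards [hsand s h1 h2] with ω h
      simp only [negP_apply]
      rw [min_neg_neg, max_neg_neg, max_comm, min_comm]
      exact ⟨neg_le_neg h.2, neg_le_neg h.1⟩)
    τ hτ hτr
  intro n h1 h2
  have hrw := payoffD_dual X Y Z (hitTime (negP V) (negP Y) (negP Z) T t) τ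
  have hneg := condExp_neg (μ := μ) (m := ℱ n)
    (payoffD X Y Z τ (hitTime (negP V) (negP Y) (negP Z) T t))
  filter_upwards [hmain n h1 h2, hneg] with ω hw hnw hmem
  have h3 := hw hmem
  rw [negP_apply] at h3
  rw [hrw] at h3
  have h4 : (μ[fun ω => -(payoffD X Y Z τ (hitTime (negP V) (negP Y) (negP Z) T t) ω)|ℱ n]) ω
      = -((μ[payoffD X Y Z τ (hitTime (negP V) (negP Y) (negP Z) T t)|ℱ n]) ω) := by
    have : (fun ω => -(payoffD X Y Z τ (hitTime (negP V) (negP Y) (negP Z) T t) ω))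
        = -(payoffD X Y Z τ (hitTime (negP V) (negP Y) (negP Z) T t)) := rfl
    rw [this, hnw]; rfl
  rw [h4] at h3
  linarith

end Dual
section MainAux

open scoped Classical

variable {Ω : Type*} {m0 : MeasurableSpace Ω} {μ : Measure Ω} [IsProbabilityMeasure μ]
  {ℱ : Filtration ℕ m0}

lemma dev_stopping {t : ℕ} {S : Set Ω} (hS : MeasurableSet[ℱ t] S)
    {d σ0 : Ω → ℕ} (hd : IsStoppingTime ℱ (fun ω => (d ω : WithTop ℕ))) (hσ0 : IsStoppingTime ℱ (fun ω => (σ0 ω : WithTop ℕ)))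
    (hdge : ∀ ω, t ≤ d ω) (hσ0ge : ∀ ω, t ≤ σ0 ω) :
    IsStoppingTime ℱ (fun ω => ((if ω ∈ S then d ω else σ0 ω : ℕ) : WithTop ℕ)) := by
  refine isStoppingTime_nat_of (fun n => ?_)
  by_cases hn : t ≤ n
  · have heq : {ω | (if ω ∈ S then d ω else σ0 ω) ≤ n}
        = (S ∩ {ω | d ω ≤ n}) ∪ (Sᶜ ∩ {ω | σ0 ω ≤ n}) := by
      ext ω
      by_cases hm : ω ∈ S <;> simp [hm]
    rw [heq]
    exact ((ℱ.mono hn _ hS).inter (hd.measurableSet_le_nat n)).union ((ℱ.mono hn _ hS).compl.inter (hσ0.measurableSet_le_nat n))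
  · have heq : {ω | (if ω ∈ S then d ω else σ0 ω) ≤ n} = ∅ := by
      ext ω
      simp only [Set.mem_setOf_eq, Set.mem_empty_iff_false, iff_false, not_le]
      by_cases hm : ω ∈ S
      · simp only [hm, if_true]; exact lt_of_lt_of_le (Nat.lt_of_not_le hn) (hdge ω)
      · simp only [hm, if_false]; exact lt_of_lt_of_le (Nat.lt_of_not_le hn) (hσ0ge ω)
    rw [heq]; exact @MeasurableSet.empty _ (ℱ n)

end MainAux
open scoped Classical in
/-- Main discrete-time theorem: for the backward-induction process `V` built from
`L = X ∧ Z` and `U = Y ∨ Z`, the sandwich condition `X_t ∧ Y_t ≤ V_t ≤ X_t ∨ Y_t`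
holds (a.s.) for all `t = 0, ..., T` if and only if the general Dynkin game
`GDG_t(X,Y,Z)` admits a Nash equilibrium for every `t = 0, ..., T`. -/
theorem stmt13 {Ω : Type*} {m0 : MeasurableSpace Ω} (μ : Measure Ω) [IsProbabilityMeasure μ]
    (ℱ : Filtration ℕ m0) (T : ℕ)
    (X Y Z V : ℕ → Ω → ℝ)
    (hXa : Adapted ℱ X) (hYa : Adapted ℱ Y) (hZa : Adapted ℱ Z)
    (hXi : ∀ s, Integrable (X s) μ) (hYi : ∀ s, Integrable (Y s) μ)
    (hZi : ∀ s, Integrable (Z s) μ)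
    (htermX : ∀ ω, X T ω = Z T ω) (htermY : ∀ ω, Y T ω = Z T ω)
    (hVT : ∀ ω, V T ω = Z T ω)
    (hV : ∀ s, s < T → ∀ ω, V s ω =
      min (max (Y s ω) (Z s ω))
        (max (min (X s ω) (Z s ω)) ((μ[V (s + 1) | ℱ s]) ω))) :
    (∀ t, t ≤ T → ∀ᵐ ω ∂μ,
        min (X t ω) (Y t ω) ≤ V t ω ∧ V t ω ≤ max (X t ω) (Y t ω)) ↔
    (∀ t, t ≤ T → ∃ τs σs : Ω → ℕ,
        IsStoppingTime ℱ (fun ω => (τs ω : WithTop ℕ)) ∧ IsStoppingTime ℱ (fun ω => (σs ω : WithTop ℕ)) ∧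
        (∀ ω, τs ω ∈ Set.Icc t T) ∧ (∀ ω, σs ω ∈ Set.Icc t T) ∧
        ∀ τ σ : Ω → ℕ, IsStoppingTime ℱ (fun ω => (τ ω : WithTop ℕ)) → IsStoppingTime ℱ (fun ω => (σ ω : WithTop ℕ)) →
          (∀ ω, τ ω ∈ Set.Icc t T) → (∀ ω, σ ω ∈ Set.Icc t T) →
          (μ[payoffD X Y Z τs σs | ℱ t] ≤ᵐ[μ] μ[payoffD X Y Z τs σ | ℱ t]) ∧
          (μ[payoffD X Y Z τ σs | ℱ t] ≤ᵐ[μ] μ[payoffD X Y Z τs σs | ℱ t])) := by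
  -- measurability and integrability of V
  have hVmi : ∀ k s, s ≤ T → T ≤ s + k →
      StronglyMeasurable[ℱ s] (V s) ∧ Integrable (V s) μ := by
    intro k
    induction k with
    | zero =>
      intro s h1 h2
      have hsT : s = T := by omega
      subst hsT
      have heq : V s = Z s := funext (hVT)
      rw [heq]
      exact ⟨(hZa s).stronglyMeasurable, hZi s⟩
    | succ k ih =>
      intro s h1 h2
      by_cases hsT : s = T
      · subst hsT
        have heq : V s = Z s := funext (hVT)
        rw [heq]
        exact ⟨(hZa s).stronglyMeasurable, hZi s⟩
      · have hsT2 : s < T := lt_of_le_of_ne h1 hsT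
        have heq : V s = fun ω => min (max (Y s ω) (Z s ω))
            (max (min (X s ω) (Z s ω)) ((μ[V (s + 1) | ℱ s]) ω)) := funext (hV s hsT2)
        constructor
        · rw [heq]
          letI : MeasurableSpace Ω := ℱ s
          exact ((hYa s).stronglyMeasurable.sup (hZa s).stronglyMeasurable).inf
              (((hXa s).stronglyMeasurable.inf (hZa s).stronglyMeasurable).sup stronglyMeasurable_condExp)
        · rw [heq]
          exact (((hYi s).sup (hZi s)).inf
            (((hXi s).inf (hZi s)).sup integrable_condExp))
  have hVmeas : ∀ s, s ≤ T → StronglyMeasurable[ℱ s] (V s) :=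
    fun s hs => (hVmi T s hs (by omega)).1
  have hVint : ∀ s, s ≤ T → Integrable (V s) μ :=
    fun s hs => (hVmi T s hs (by omega)).2
  have hVrec : ∀ s, s < T → ∀ᵐ ω ∂μ, V s ω =
      min (max (Y s ω) (Z s ω)) (max (min (X s ω) (Z s ω)) ((μ[V (s + 1) | ℱ s]) ω)) :=
    fun s hs => Filter.Eventually.of_forall (hV s hs)
  have hVmeas' : ∀ s, s ≤ T → StronglyMeasurable[ℱ s] ((negP V) s) :=
    fun s hs => (hVmeas s hs).neg
  have hint : ∀ (a b : Ω → ℕ), IsStoppingTime ℱ (fun ω => (a ω : WithTop ℕ)) → IsStoppingTime ℱ (fun ω => (b ω : WithTop ℕ)) →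
      (∀ ω, a ω ≤ T) → (∀ ω, b ω ≤ T) → Integrable (payoffD X Y Z a b) μ :=
    fun a b ha hb h1 h2 =>
      payoff_integrable T hXa hYa hZa hXi hYi hZi (st_measurable ha) (st_measurable hb) h1 h2
  constructor
  · -- sandwich → Nash
    intro hsand t htT
    set τs := hitTime V X Z T t with hτsdef
    set σs := hitTime (negP V) (negP Y) (negP Z) T t with hσsdef
    have hτst : IsStoppingTime ℱ (fun ω => (τs ω : WithTop ℕ)) := hitTime_isStoppingTime htT hVmeas hXa hZa
    have hσst : IsStoppingTime ℱ (fun ω => (σs ω : WithTop ℕ)) :=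
      hitTime_isStoppingTime htT hVmeas' (fun s => (hYa s).neg) (fun s => (hZa s).neg)
    have hτsr : ∀ ω, τs ω ∈ Set.Icc t T := fun ω => ⟨hitTime_ge ω, hitTime_le htT ω⟩
    have hσsr : ∀ ω, σs ω ∈ Set.Icc t T := fun ω => ⟨hitTime_ge ω, hitTime_le htT ω⟩
    have hsand2 : ∀ s, t ≤ s → s ≤ T → ∀ᵐ ω ∂μ,
        min (X s ω) (Y s ω) ≤ V s ω ∧ V s ω ≤ max (X s ω) (Y s ω) :=
      fun s _ hs => hsand s hs
    refine ⟨τs, σs, hτst, hσst, hτsr, hσsr, ?_⟩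
    intro τ σ hτ hσ hτr hσr
    -- the four key comparisons
    have hGE : ∀ (σ' : Ω → ℕ), IsStoppingTime ℱ (fun ω => (σ' ω : WithTop ℕ)) → (∀ ω, σ' ω ∈ Set.Icc t T) →
        V t ≤ᵐ[μ] μ[payoffD X Y Z τs σ' | ℱ t] := by
      intro σ' hσ' hσ'r
      have h := keyGE μ ℱ T X Y Z V hXa hYa hZa hXi hYi hZi hVmeas hVint hVT hVrec
        t htT hsand2 σ' hσ' hσ'r t le_rfl htT
      filter_upwards [h] with ω hw
      exact hw ⟨hitTime_ge ω, (hσ'r ω).1⟩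
    have hLE : ∀ (τ' : Ω → ℕ), IsStoppingTime ℱ (fun ω => (τ' ω : WithTop ℕ)) → (∀ ω, τ' ω ∈ Set.Icc t T) →
        μ[payoffD X Y Z τ' σs | ℱ t] ≤ᵐ[μ] V t := by
      intro τ' hτ' hτ'r
      have h := keyLE μ ℱ T X Y Z V hXa hYa hZa hXi hYi hZi hVmeas hVint hVT hVrec
        t htT hsand2 τ' hτ' hτ'r t le_rfl htT
      filter_upwards [h] with ω hw
      exact hw ⟨hitTime_ge ω, (hτ'r ω).1⟩
    constructor
    · exact (hLE τs hτst hτsr).trans (hGE σ hσ hσr)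
    · exact (hLE τ hτ hτr).trans (hGE σs hσst hσsr)
  · -- Nash → sandwich
    intro hNash
    suffices H : ∀ k t, t ≤ T → T - t ≤ k →
        (∀ᵐ ω ∂μ, min (X t ω) (Y t ω) ≤ V t ω ∧ V t ω ≤ max (X t ω) (Y t ω)) by
      intro t ht; exact H (T - t) t ht le_rfl
    intro k
    induction k with
    | zero =>
      intro t htT hk
      have htT' : t = T := by omega
      subst htT'
      apply Filter.Eventually.of_forall
      intro ω
      rw [hVT ω, htermX ω, htermY ω]
      simp
    | succ k ih =>
      intro t htT hk
      by_cases htT' : t = T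
      · subst htT'
        apply Filter.Eventually.of_forall
        intro ω
        rw [hVT ω, htermX ω, htermY ω]
        simp
      have ht2 : t < T := lt_of_le_of_ne htT htT'
      have ihsand : ∀ s, t + 1 ≤ s → s ≤ T → ∀ᵐ ω ∂μ,
          min (X s ω) (Y s ω) ≤ V s ω ∧ V s ω ≤ max (X s ω) (Y s ω) :=
        fun s h1 h2 => ih s h2 (by omega)
      obtain ⟨τs, σs, hτst, hσst, hτsr, hσsr, hN⟩ := hNash t htT
      set W := μ[payoffD X Y Z τs σs | ℱ t] with hWdef
      set e := μ[V (t + 1) | ℱ t] with hedef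
      set τp := hitTime V X Z T (t + 1) with hτpdef
      set σp := hitTime (negP V) (negP Y) (negP Z) T (t + 1) with hσpdef
      have ht1T : t + 1 ≤ T := ht2
      have hτpst : IsStoppingTime ℱ (fun ω => (τp ω : WithTop ℕ)) := hitTime_isStoppingTime ht1T hVmeas hXa hZa
      have hσpst : IsStoppingTime ℱ (fun ω => (σp ω : WithTop ℕ)) :=
        hitTime_isStoppingTime ht1T hVmeas' (fun s => (hYa s).neg) (fun s => (hZa s).neg)
      have hτpr : ∀ ω, τp ω ∈ Set.Icc (t + 1) T :=
        fun ω => ⟨hitTime_ge ω, hitTime_le ht1T ω⟩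
      have hσpr : ∀ ω, σp ω ∈ Set.Icc (t + 1) T :=
        fun ω => ⟨hitTime_ge ω, hitTime_le ht1T ω⟩
      -- machinery from time t+1
      have MG1 : ∀ (σ' : Ω → ℕ), IsStoppingTime ℱ (fun ω => (σ' ω : WithTop ℕ)) → (∀ ω, σ' ω ∈ Set.Icc (t + 1) T) →
          e ≤ᵐ[μ] μ[payoffD X Y Z τp σ' | ℱ t] := by
        intro σ' h1 h2
        have h := keyGE μ ℱ T X Y Z V hXa hYa hZa hXi hYi hZi hVmeas hVint hVT hVrec
          (t + 1) ht1T ihsand σ' h1 h2 (t + 1) le_rfl ht1T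
        have h' : V (t + 1) ≤ᵐ[μ] μ[payoffD X Y Z τp σ' | ℱ (t + 1)] := by
          filter_upwards [h] with ω hw; exact hw ⟨hitTime_ge ω, (h2 ω).1⟩
        exact tower_mono (hVint (t + 1) ht1T)
          (hint τp σ' hτpst h1 (fun ω => (hτpr ω).2) (fun ω => (h2 ω).2)) h'
      have MG2 : ∀ (τ' : Ω → ℕ), IsStoppingTime ℱ (fun ω => (τ' ω : WithTop ℕ)) → (∀ ω, τ' ω ∈ Set.Icc (t + 1) T) →
          μ[payoffD X Y Z τ' σp | ℱ t] ≤ᵐ[μ] e := by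
        intro τ' h1 h2
        have h := keyLE μ ℱ T X Y Z V hXa hYa hZa hXi hYi hZi hVmeas hVint hVT hVrec
          (t + 1) ht1T ihsand τ' h1 h2 (t + 1) le_rfl ht1T
        have h' : μ[payoffD X Y Z τ' σp | ℱ (t + 1)] ≤ᵐ[μ] V (t + 1) := by
          filter_upwards [h] with ω hw; exact hw ⟨hitTime_ge ω, (h2 ω).1⟩
        exact tower_mono' (hVint (t + 1) ht1T)
          (hint τ' σp h1 hσpst (fun ω => (h2 ω).2) (fun ω => (hσpr ω).2)) h'
      -- bad sets
      set A : Set Ω := {ω | max (X t ω) (Y t ω) < V t ω} with hAdef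
      set A' : Set Ω := {ω | V t ω < min (X t ω) (Y t ω)} with hA'def
      have hA : MeasurableSet[ℱ t] A := by
        letI : MeasurableSpace Ω := ℱ t
        exact measurableSet_lt ((hXa t).max (hYa t))
          (hVmeas t htT).measurable
      have hA' : MeasurableSet[ℱ t] A' := by
        letI : MeasurableSpace Ω := ℱ t
        exact measurableSet_lt (hVmeas t htT).measurable
          ((hXa t).min (hYa t))
      -- pointwise facts
      have hfA : ∀ ω, ω ∈ A →
          X t ω < V t ω ∧ Y t ω < V t ω ∧ V t ω ≤ Z t ω ∧ V t ω ≤ e ω := by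
        intro ω hω
        have hω' : max (X t ω) (Y t ω) < V t ω := hω
        have hrec := hV t ht2 ω
        have hX : X t ω < V t ω := lt_of_le_of_lt (le_max_left _ _) hω'
        have hY : Y t ω < V t ω := lt_of_le_of_lt (le_max_right _ _) hω'
        have hU : V t ω ≤ max (Y t ω) (Z t ω) := by rw [hrec]; exact min_le_left _ _
        have hZ : V t ω ≤ Z t ω := by
          rcases le_max_iff.mp hU with h | h
          · linarith
          · exact h
        have hBle : V t ω ≤ max (min (X t ω) (Z t ω)) (e ω) := by
          rw [hrec]; exact min_le_right _ _
        have he : V t ω ≤ e ω := by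
          rcases le_max_iff.mp hBle with h | h
          · have := min_le_left (X t ω) (Z t ω); linarith
          · exact h
        exact ⟨hX, hY, hZ, he⟩
      have hfA' : ∀ ω, ω ∈ A' →
          V t ω < X t ω ∧ V t ω < Y t ω ∧ Z t ω ≤ V t ω ∧ e ω ≤ V t ω := by
        intro ω hω
        have hω' : V t ω < min (X t ω) (Y t ω) := hω
        have hrec := hV t ht2 ω
        have hX : V t ω < X t ω := lt_of_lt_of_le hω' (min_le_left _ _)
        have hY : V t ω < Y t ω := lt_of_lt_of_le hω' (min_le_right _ _)
        have hVB : V t ω = max (min (X t ω) (Z t ω)) (e ω) := by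
          rcases le_total (max (Y t ω) (Z t ω)) (max (min (X t ω) (Z t ω)) (e ω)) with h | h
          · exfalso
            have : V t ω = max (Y t ω) (Z t ω) := by rw [hrec, min_eq_left h]
            have := le_max_left (Y t ω) (Z t ω)
            linarith
          · rw [hrec, min_eq_right h]
        have he : e ω ≤ V t ω := by rw [hVB]; exact le_max_right _ _
        have hminle : min (X t ω) (Z t ω) ≤ V t ω := by rw [hVB]; exact le_max_left _ _
        have hZ : Z t ω ≤ V t ω := by
          rcases le_total (X t ω) (Z t ω) with h | h
          · rw [min_eq_left h] at hminle; linarith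
          · rw [min_eq_right h] at hminle; exact hminle
        exact ⟨hX, hY, hZ, he⟩
      -- conditional expectation of adapted processes at t
      have hXce : μ[X t | ℱ t] = X t :=
        condExp_of_stronglyMeasurable (ℱ.le t) (hXa t).stronglyMeasurable (hXi t)
      have hYce : μ[Y t | ℱ t] = Y t :=
        condExp_of_stronglyMeasurable (ℱ.le t) (hYa t).stronglyMeasurable (hYi t)
      have hZce : μ[Z t | ℱ t] = Z t :=
        condExp_of_stronglyMeasurable (ℱ.le t) (hZa t).stronglyMeasurable (hZi t)
      have hτsT : ∀ ω, τs ω ≤ T := fun ω => (hτsr ω).2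
      have hσsT : ∀ ω, σs ω ≤ T := fun ω => (hσsr ω).2
      have hτsge : ∀ ω, t ≤ τs ω := fun ω => (hτsr ω).1
      have hσsge : ∀ ω, t ≤ σs ω := fun ω => (hσsr ω).1
      have hR0int : Integrable (payoffD X Y Z τs σs) μ := hint τs σs hτst hσst hτsT hσsT
      -- common auxiliary stopping times
      set σl : Ω → ℕ := fun ω => max (σs ω) (t + 1) with hσldef
      have hσlst : IsStoppingTime ℱ (fun ω => (σl ω : WithTop ℕ)) := hσst.max_nat (isStoppingTime_const_nat ℱ (t + 1))
      have hσlr : ∀ ω, σl ω ∈ Set.Icc (t + 1) T :=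
        fun ω => ⟨le_max_right _ _, max_le (hσsT ω) ht1T⟩
      set τl : Ω → ℕ := fun ω => max (τs ω) (t + 1) with hτldef
      have hτlst : IsStoppingTime ℱ (fun ω => (τl ω : WithTop ℕ)) := hτst.max_nat (isStoppingTime_const_nat ℱ (t + 1))
      have hτlr : ∀ ω, τl ω ∈ Set.Icc (t + 1) T :=
        fun ω => ⟨le_max_right _ _, max_le (hτsT ω) ht1T⟩
      set Rm : Ω → ℝ := payoffD X Y Z τp σl with hRmdef
      have hRmint : Integrable Rm μ :=
        hint τp σl hτpst hσlst (fun ω => (hτpr ω).2) (fun ω => (hσlr ω).2)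
      have hMGm : e ≤ᵐ[μ] μ[Rm | ℱ t] := MG1 σl hσlst hσlr
      set Rm' : Ω → ℝ := payoffD X Y Z τl σp with hRm'def
      have hRm'int : Integrable Rm' μ :=
        hint τl σp hτlst hσpst (fun ω => (hτlr ω).2) (fun ω => (hσpr ω).2)
      have hMGm' : μ[Rm' | ℱ t] ≤ᵐ[μ] e := MG2 τl hτlst hτlr
      -- Case killing : the four bad configurations on A
      set S1 : Set Ω := (A ∩ {ω | τs ω = t}) ∩ {ω | σs ω = t} with hS1def
      have hS1 : MeasurableSet[ℱ t] S1 :=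
        (hA.inter (hτst.measurableSet_eq_nat t)).inter (hσst.measurableSet_eq_nat t)
      have D1 : ∀ᵐ ω ∂μ, ω ∈ S1 → False := by
        set σd : Ω → ℕ := fun ω => @ite ℕ (ω ∈ S1) (Classical.propDecidable _) (T) (σs ω) with hσddef
        have hσdst : IsStoppingTime ℱ (fun ω => (σd ω : WithTop ℕ)) := by
          rw [hσddef]
          exact dev_stopping hS1 (isStoppingTime_const_nat ℱ T) hσst (fun _ => htT) hσsge
        have hσdr : ∀ ω, σd ω ∈ Set.Icc t T := by
          intro ω; by_cases hm : ω ∈ S1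
          · simp only [hσddef, if_pos hm]; exact ⟨htT, le_rfl⟩
          · simp only [hσddef, if_neg hm]; exact hσsr ω
        have hdint : Integrable (payoffD X Y Z τs σd) μ :=
          hint τs σd hτst hσdst hτsT (fun ω => (hσdr ω).2)
        have nash1 := (hN τs σd hτst hσdst hτsr hσdr).1
        have cW : ∀ᵐ ω ∂μ, ω ∈ S1 → W ω = (μ[Z t | ℱ t]) ω := by
          apply condexp_congr_on hS1 hR0int (hZi t)
          apply Filter.Eventually.of_forall
          intro ω hm
          have a1 : τs ω = t := hm.1.2
          have a2 : σs ω = t := hm.2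
          unfold payoffD
          rw [a1, a2]
          simp
        have cD : ∀ᵐ ω ∂μ, ω ∈ S1 →
            (μ[payoffD X Y Z τs σd | ℱ t]) ω = (μ[X t | ℱ t]) ω := by
          apply condexp_congr_on hS1 hdint (hXi t)
          apply Filter.Eventually.of_forall
          intro ω hm
          have h2 : σd ω = T := by simp only [hσddef, if_pos hm]
          have a1 : τs ω = t := hm.1.2
          unfold payoffD
          rw [a1, h2, if_pos ht2]
        filter_upwards [nash1, cW, cD] with ω i1 c1 c2 hm
        have f := hfA ω hm.1.1
        have c1' := c1 hm; rw [hZce] at c1'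
        have c2' := c2 hm; rw [hXce] at c2'
        linarith [f.1, f.2.2.1]
      set S2 : Set Ω := (A ∩ {ω | τs ω = t}) ∩ {ω | t < σs ω} with hS2def
      have hS2 : MeasurableSet[ℱ t] S2 :=
        (hA.inter (hτst.measurableSet_eq_nat t)).inter (hσst.measurableSet_gt_nat t)
      have D2 : ∀ᵐ ω ∂μ, ω ∈ S2 → False := by
        set τd : Ω → ℕ := fun ω => @ite ℕ (ω ∈ S2) (Classical.propDecidable _) (τp ω) (τs ω) with hτddef
        have hτdst : IsStoppingTime ℱ (fun ω => (τd ω : WithTop ℕ)) := by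
          rw [hτddef]
          exact dev_stopping hS2 hτpst hτst (fun ω => le_trans (Nat.le_succ t) (hτpr ω).1) hτsge
        have hτdr : ∀ ω, τd ω ∈ Set.Icc t T := by
          intro ω; by_cases hm : ω ∈ S2
          · simp only [hτddef, if_pos hm]
            exact ⟨le_trans (Nat.le_succ t) (hτpr ω).1, (hτpr ω).2⟩
          · simp only [hτddef, if_neg hm]; exact hτsr ω
        have hdint : Integrable (payoffD X Y Z τd σs) μ :=
          hint τd σs hτdst hσst (fun ω => (hτdr ω).2) hσsT
        have nash2 := (hN τd σs hτdst hσst hτdr hσsr).2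
        have ceq : ∀ᵐ ω ∂μ, ω ∈ S2 →
            (μ[payoffD X Y Z τd σs | ℱ t]) ω = (μ[Rm | ℱ t]) ω := by
          apply condexp_congr_on hS2 hdint hRmint
          apply Filter.Eventually.of_forall
          intro ω hm
          have h1 : τd ω = τp ω := by simp only [hτddef, if_pos hm]
          have h2 : σl ω = σs ω := by
            have hlt : t < σs ω := hm.2
            simp only [hσldef]; exact max_eq_left (Nat.succ_le_of_lt hlt)
          show payoffD X Y Z τd σs ω = payoffD X Y Z τp σl ω
          unfold payoffD
          rw [h1, h2]
        have cW : ∀ᵐ ω ∂μ, ω ∈ S2 → W ω = (μ[X t | ℱ t]) ω := by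
          apply condexp_congr_on hS2 hR0int (hXi t)
          apply Filter.Eventually.of_forall
          intro ω hm
          have a1 : τs ω = t := hm.1.2
          have a2 : t < σs ω := hm.2
          unfold payoffD
          rw [a1, if_pos a2]
        filter_upwards [nash2, ceq, cW, hMGm] with ω n2 q1 q2 m1 hm
        have f := hfA ω hm.1.1
        have q1' := q1 hm
        have q2' := q2 hm; rw [hXce] at q2'
        linarith [f.1, f.2.2.2]
      set S3 : Set Ω := (A ∩ {ω | t < τs ω}) ∩ {ω | σs ω = t} with hS3def
      have hS3 : MeasurableSet[ℱ t] S3 :=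
        (hA.inter (hτst.measurableSet_gt_nat t)).inter (hσst.measurableSet_eq_nat t)
      have D3 : ∀ᵐ ω ∂μ, ω ∈ S3 → False := by
        set τd : Ω → ℕ := fun ω => @ite ℕ (ω ∈ S3) (Classical.propDecidable _) (t) (τs ω) with hτddef
        have hτdst : IsStoppingTime ℱ (fun ω => (τd ω : WithTop ℕ)) := by
          rw [hτddef]
          exact dev_stopping hS3 (isStoppingTime_const_nat ℱ t) hτst (fun _ => le_rfl) hτsge
        have hτdr : ∀ ω, τd ω ∈ Set.Icc t T := by
          intro ω; by_cases hm : ω ∈ S3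
          · simp only [hτddef, if_pos hm]; exact ⟨le_rfl, htT⟩
          · simp only [hτddef, if_neg hm]; exact hτsr ω
        have hdint : Integrable (payoffD X Y Z τd σs) μ :=
          hint τd σs hτdst hσst (fun ω => (hτdr ω).2) hσsT
        have nash2 := (hN τd σs hτdst hσst hτdr hσsr).2
        have cD : ∀ᵐ ω ∂μ, ω ∈ S3 →
            (μ[payoffD X Y Z τd σs | ℱ t]) ω = (μ[Z t | ℱ t]) ω := by
          apply condexp_congr_on hS3 hdint (hZi t)
          apply Filter.Eventually.of_forall
          intro ω hm
          have h1 : τd ω = t := by simp only [hτddef, if_pos hm]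
          have a2 : σs ω = t := hm.2
          unfold payoffD
          rw [h1, a2]
          simp
        have cW : ∀ᵐ ω ∂μ, ω ∈ S3 → W ω = (μ[Y t | ℱ t]) ω := by
          apply condexp_congr_on hS3 hR0int (hYi t)
          apply Filter.Eventually.of_forall
          intro ω hm
          have h2 : t < τs ω := hm.1.2
          have a2 : σs ω = t := hm.2
          unfold payoffD
          rw [a2, if_neg (by omega : ¬ τs ω < t), if_pos h2]
        filter_upwards [nash2, cD, cW] with ω n2 c1 c2 hm
        have f := hfA ω hm.1.1
        have c1' := c1 hm; rw [hZce] at c1'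
        have c2' := c2 hm; rw [hYce] at c2'
        linarith [f.2.1, f.2.2.1]
      set S4 : Set Ω := (A ∩ {ω | t < τs ω}) ∩ {ω | t < σs ω} with hS4def
      have hS4 : MeasurableSet[ℱ t] S4 :=
        (hA.inter (hτst.measurableSet_gt_nat t)).inter (hσst.measurableSet_gt_nat t)
      have D4 : ∀ᵐ ω ∂μ, ω ∈ S4 → False := by
        set σd : Ω → ℕ := fun ω => @ite ℕ (ω ∈ S4) (Classical.propDecidable _) (t) (σs ω) with hσddef
        have hσdst : IsStoppingTime ℱ (fun ω => (σd ω : WithTop ℕ)) := by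
          rw [hσddef]
          exact dev_stopping hS4 (isStoppingTime_const_nat ℱ t) hσst (fun _ => le_rfl) hσsge
        have hσdr : ∀ ω, σd ω ∈ Set.Icc t T := by
          intro ω; by_cases hm : ω ∈ S4
          · simp only [hσddef, if_pos hm]; exact ⟨le_rfl, htT⟩
          · simp only [hσddef, if_neg hm]; exact hσsr ω
        have hdint : Integrable (payoffD X Y Z τs σd) μ :=
          hint τs σd hτst hσdst hτsT (fun ω => (hσdr ω).2)
        have nash1 := (hN τs σd hτst hσdst hτsr hσdr).1
        have cD : ∀ᵐ ω ∂μ, ω ∈ S4 →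
            (μ[payoffD X Y Z τs σd | ℱ t]) ω = (μ[Y t | ℱ t]) ω := by
          apply condexp_congr_on hS4 hdint (hYi t)
          apply Filter.Eventually.of_forall
          intro ω hm
          have h1 : σd ω = t := by simp only [hσddef, if_pos hm]
          have h2 : t < τs ω := hm.1.2
          unfold payoffD
          rw [h1, if_neg (by omega : ¬ τs ω < t), if_pos h2]
        set τd : Ω → ℕ := fun ω => @ite ℕ (ω ∈ S4) (Classical.propDecidable _) (τp ω) (τs ω) with hτddef
        have hτdst : IsStoppingTime ℱ (fun ω => (τd ω : WithTop ℕ)) := by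
          rw [hτddef]
          exact dev_stopping hS4 hτpst hτst (fun ω => le_trans (Nat.le_succ t) (hτpr ω).1) hτsge
        have hτdr : ∀ ω, τd ω ∈ Set.Icc t T := by
          intro ω; by_cases hm : ω ∈ S4
          · simp only [hτddef, if_pos hm]
            exact ⟨le_trans (Nat.le_succ t) (hτpr ω).1, (hτpr ω).2⟩
          · simp only [hτddef, if_neg hm]; exact hτsr ω
        have hdint2 : Integrable (payoffD X Y Z τd σs) μ :=
          hint τd σs hτdst hσst (fun ω => (hτdr ω).2) hσsT
        have nash2 := (hN τd σs hτdst hσst hτdr hσsr).2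
        have ceq : ∀ᵐ ω ∂μ, ω ∈ S4 →
            (μ[payoffD X Y Z τd σs | ℱ t]) ω = (μ[Rm | ℱ t]) ω := by
          apply condexp_congr_on hS4 hdint2 hRmint
          apply Filter.Eventually.of_forall
          intro ω hm
          have h1 : τd ω = τp ω := by simp only [hτddef, if_pos hm]
          have h2 : σl ω = σs ω := by
            have hlt : t < σs ω := hm.2
            simp only [hσldef]; exact max_eq_left (Nat.succ_le_of_lt hlt)
          show payoffD X Y Z τd σs ω = payoffD X Y Z τp σl ω
          unfold payoffD
          rw [h1, h2]
        filter_upwards [nash1, nash2, cD, ceq, hMGm] with ω n1 n2 c1 q1 m1 hm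
        have f := hfA ω hm.1.1
        have c1' := c1 hm; rw [hYce] at c1'
        have q1' := q1 hm
        linarith [f.2.1, f.2.2.2]
      -- the four bad configurations on A'
      set T1 : Set Ω := (A' ∩ {ω | τs ω = t}) ∩ {ω | σs ω = t} with hT1def
      have hT1 : MeasurableSet[ℱ t] T1 :=
        (hA'.inter (hτst.measurableSet_eq_nat t)).inter (hσst.measurableSet_eq_nat t)
      have E1 : ∀ᵐ ω ∂μ, ω ∈ T1 → False := by
        set τd : Ω → ℕ := fun ω => @ite ℕ (ω ∈ T1) (Classical.propDecidable _) (T) (τs ω) with hτddef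
        have hτdst : IsStoppingTime ℱ (fun ω => (τd ω : WithTop ℕ)) := by
          rw [hτddef]
          exact dev_stopping hT1 (isStoppingTime_const_nat ℱ T) hτst (fun _ => htT) hτsge
        have hτdr : ∀ ω, τd ω ∈ Set.Icc t T := by
          intro ω; by_cases hm : ω ∈ T1
          · simp only [hτddef, if_pos hm]; exact ⟨htT, le_rfl⟩
          · simp only [hτddef, if_neg hm]; exact hτsr ω
        have hdint : Integrable (payoffD X Y Z τd σs) μ :=
          hint τd σs hτdst hσst (fun ω => (hτdr ω).2) hσsT
        have nash2 := (hN τd σs hτdst hσst hτdr hσsr).2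
        have cD : ∀ᵐ ω ∂μ, ω ∈ T1 →
            (μ[payoffD X Y Z τd σs | ℱ t]) ω = (μ[Y t | ℱ t]) ω := by
          apply condexp_congr_on hT1 hdint (hYi t)
          apply Filter.Eventually.of_forall
          intro ω hm
          have h1 : τd ω = T := by simp only [hτddef, if_pos hm]
          have a2 : σs ω = t := hm.2
          unfold payoffD
          rw [h1, a2, if_neg (by omega : ¬ T < t), if_pos ht2]
        have cW : ∀ᵐ ω ∂μ, ω ∈ T1 → W ω = (μ[Z t | ℱ t]) ω := by
          apply condexp_congr_on hT1 hR0int (hZi t)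
          apply Filter.Eventually.of_forall
          intro ω hm
          have a1 : τs ω = t := hm.1.2
          have a2 : σs ω = t := hm.2
          unfold payoffD
          rw [a1, a2]
          simp
        filter_upwards [nash2, cD, cW] with ω n2 c1 c2 hm
        have f := hfA' ω hm.1.1
        have c1' := c1 hm; rw [hYce] at c1'
        have c2' := c2 hm; rw [hZce] at c2'
        linarith [f.2.1, f.2.2.1]
      set T2 : Set Ω := (A' ∩ {ω | τs ω = t}) ∩ {ω | t < σs ω} with hT2def
      have hT2 : MeasurableSet[ℱ t] T2 :=
        (hA'.inter (hτst.measurableSet_eq_nat t)).inter (hσst.measurableSet_gt_nat t)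
      have E2 : ∀ᵐ ω ∂μ, ω ∈ T2 → False := by
        set σd : Ω → ℕ := fun ω => @ite ℕ (ω ∈ T2) (Classical.propDecidable _) (t) (σs ω) with hσddef
        have hσdst : IsStoppingTime ℱ (fun ω => (σd ω : WithTop ℕ)) := by
          rw [hσddef]
          exact dev_stopping hT2 (isStoppingTime_const_nat ℱ t) hσst (fun _ => le_rfl) hσsge
        have hσdr : ∀ ω, σd ω ∈ Set.Icc t T := by
          intro ω; by_cases hm : ω ∈ T2
          · simp only [hσddef, if_pos hm]; exact ⟨le_rfl, htT⟩
          · simp only [hσddef, if_neg hm]; exact hσsr ω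
        have hdint : Integrable (payoffD X Y Z τs σd) μ :=
          hint τs σd hτst hσdst hτsT (fun ω => (hσdr ω).2)
        have nash1 := (hN τs σd hτst hσdst hτsr hσdr).1
        have cD : ∀ᵐ ω ∂μ, ω ∈ T2 →
            (μ[payoffD X Y Z τs σd | ℱ t]) ω = (μ[Z t | ℱ t]) ω := by
          apply condexp_congr_on hT2 hdint (hZi t)
          apply Filter.Eventually.of_forall
          intro ω hm
          have h1 : σd ω = t := by simp only [hσddef, if_pos hm]
          have a1 : τs ω = t := hm.1.2
          unfold payoffD
          rw [h1, a1]
          simp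
        have cW : ∀ᵐ ω ∂μ, ω ∈ T2 → W ω = (μ[X t | ℱ t]) ω := by
          apply condexp_congr_on hT2 hR0int (hXi t)
          apply Filter.Eventually.of_forall
          intro ω hm
          have a1 : τs ω = t := hm.1.2
          have a2 : t < σs ω := hm.2
          unfold payoffD
          rw [a1, if_pos a2]
        filter_upwards [nash1, cD, cW] with ω n1 c1 c2 hm
        have f := hfA' ω hm.1.1
        have c1' := c1 hm; rw [hZce] at c1'
        have c2' := c2 hm; rw [hXce] at c2'
        linarith [f.1, f.2.2.1]
      set T3 : Set Ω := (A' ∩ {ω | t < τs ω}) ∩ {ω | σs ω = t} with hT3def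
      have hT3 : MeasurableSet[ℱ t] T3 :=
        (hA'.inter (hτst.measurableSet_gt_nat t)).inter (hσst.measurableSet_eq_nat t)
      have E3 : ∀ᵐ ω ∂μ, ω ∈ T3 → False := by
        set σd : Ω → ℕ := fun ω => @ite ℕ (ω ∈ T3) (Classical.propDecidable _) (σp ω) (σs ω) with hσddef
        have hσdst : IsStoppingTime ℱ (fun ω => (σd ω : WithTop ℕ)) := by
          rw [hσddef]
          exact dev_stopping hT3 hσpst hσst (fun ω => le_trans (Nat.le_succ t) (hσpr ω).1) hσsge
        have hσdr : ∀ ω, σd ω ∈ Set.Icc t T := by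
          intro ω; by_cases hm : ω ∈ T3
          · simp only [hσddef, if_pos hm]
            exact ⟨le_trans (Nat.le_succ t) (hσpr ω).1, (hσpr ω).2⟩
          · simp only [hσddef, if_neg hm]; exact hσsr ω
        have hdint : Integrable (payoffD X Y Z τs σd) μ :=
          hint τs σd hτst hσdst hτsT (fun ω => (hσdr ω).2)
        have nash1 := (hN τs σd hτst hσdst hτsr hσdr).1
        have ceq : ∀ᵐ ω ∂μ, ω ∈ T3 →
            (μ[payoffD X Y Z τs σd | ℱ t]) ω = (μ[Rm' | ℱ t]) ω := by
          apply condexp_congr_on hT3 hdint hRm'int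
          apply Filter.Eventually.of_forall
          intro ω hm
          have h1 : σd ω = σp ω := by simp only [hσddef, if_pos hm]
          have h2 : τl ω = τs ω := by
            have hlt : t < τs ω := hm.1.2
            simp only [hτldef]; exact max_eq_left (Nat.succ_le_of_lt hlt)
          show payoffD X Y Z τs σd ω = payoffD X Y Z τl σp ω
          unfold payoffD
          rw [h1, h2]
        have cW : ∀ᵐ ω ∂μ, ω ∈ T3 → W ω = (μ[Y t | ℱ t]) ω := by
          apply condexp_congr_on hT3 hR0int (hYi t)
          apply Filter.Eventually.of_forall
          intro ω hm
          have h2 : t < τs ω := hm.1.2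
          have a2 : σs ω = t := hm.2
          unfold payoffD
          rw [a2, if_neg (by omega : ¬ τs ω < t), if_pos h2]
        filter_upwards [nash1, ceq, cW, hMGm'] with ω n1 q1 c2 m1 hm
        have f := hfA' ω hm.1.1
        have q1' := q1 hm
        have c2' := c2 hm; rw [hYce] at c2'
        linarith [f.2.1, f.2.2.2]
      set T4 : Set Ω := (A' ∩ {ω | t < τs ω}) ∩ {ω | t < σs ω} with hT4def
      have hT4 : MeasurableSet[ℱ t] T4 :=
        (hA'.inter (hτst.measurableSet_gt_nat t)).inter (hσst.measurableSet_gt_nat t)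
      have E4 : ∀ᵐ ω ∂μ, ω ∈ T4 → False := by
        set τd : Ω → ℕ := fun ω => @ite ℕ (ω ∈ T4) (Classical.propDecidable _) (t) (τs ω) with hτddef
        have hτdst : IsStoppingTime ℱ (fun ω => (τd ω : WithTop ℕ)) := by
          rw [hτddef]
          exact dev_stopping hT4 (isStoppingTime_const_nat ℱ t) hτst (fun _ => le_rfl) hτsge
        have hτdr : ∀ ω, τd ω ∈ Set.Icc t T := by
          intro ω; by_cases hm : ω ∈ T4
          · simp only [hτddef, if_pos hm]; exact ⟨le_rfl, htT⟩
          · simp only [hτddef, if_neg hm]; exact hτsr ω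
        have hdint : Integrable (payoffD X Y Z τd σs) μ :=
          hint τd σs hτdst hσst (fun ω => (hτdr ω).2) hσsT
        have nash2 := (hN τd σs hτdst hσst hτdr hσsr).2
        have cD : ∀ᵐ ω ∂μ, ω ∈ T4 →
            (μ[payoffD X Y Z τd σs | ℱ t]) ω = (μ[X t | ℱ t]) ω := by
          apply condexp_congr_on hT4 hdint (hXi t)
          apply Filter.Eventually.of_forall
          intro ω hm
          have h1 : τd ω = t := by simp only [hτddef, if_pos hm]
          have a2 : t < σs ω := hm.2
          unfold payoffD
          rw [h1, if_pos a2]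
        set σd : Ω → ℕ := fun ω => @ite ℕ (ω ∈ T4) (Classical.propDecidable _) (σp ω) (σs ω) with hσddef
        have hσdst : IsStoppingTime ℱ (fun ω => (σd ω : WithTop ℕ)) := by
          rw [hσddef]
          exact dev_stopping hT4 hσpst hσst (fun ω => le_trans (Nat.le_succ t) (hσpr ω).1) hσsge
        have hσdr : ∀ ω, σd ω ∈ Set.Icc t T := by
          intro ω; by_cases hm : ω ∈ T4
          · simp only [hσddef, if_pos hm]
            exact ⟨le_trans (Nat.le_succ t) (hσpr ω).1, (hσpr ω).2⟩
          · simp only [hσddef, if_neg hm]; exact hσsr ω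
        have hdint2 : Integrable (payoffD X Y Z τs σd) μ :=
          hint τs σd hτst hσdst hτsT (fun ω => (hσdr ω).2)
        have nash1 := (hN τs σd hτst hσdst hτsr hσdr).1
        have ceq : ∀ᵐ ω ∂μ, ω ∈ T4 →
            (μ[payoffD X Y Z τs σd | ℱ t]) ω = (μ[Rm' | ℱ t]) ω := by
          apply condexp_congr_on hT4 hdint2 hRm'int
          apply Filter.Eventually.of_forall
          intro ω hm
          have h1 : σd ω = σp ω := by simp only [hσddef, if_pos hm]
          have h2 : τl ω = τs ω := by
            have hlt : t < τs ω := hm.1.2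
            simp only [hτldef]; exact max_eq_left (Nat.succ_le_of_lt hlt)
          show payoffD X Y Z τs σd ω = payoffD X Y Z τl σp ω
          unfold payoffD
          rw [h1, h2]
        filter_upwards [nash1, nash2, cD, ceq, hMGm'] with ω n1 n2 c1 q1 m1 hm
        have f := hfA' ω hm.1.1
        have c1' := c1 hm; rw [hXce] at c1'
        have q1' := q1 hm
        linarith [f.1, f.2.2.2]
      -- combine everything
      filter_upwards [D1, D2, D3, D4, E1, E2, E3, E4] with ω d1 d2 d3 d4 g1 g2 g3 g4
      constructor
      · by_contra hcon
        push_neg at hcon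
        have hmem : ω ∈ A' := by rw [hA'def]; exact hcon
        rcases eq_or_lt_of_le (hτsge ω) with h1 | h1 <;>
          rcases eq_or_lt_of_le (hσsge ω) with h2 | h2
        · exact g1 ⟨⟨hmem, h1.symm⟩, h2.symm⟩
        · exact g2 ⟨⟨hmem, h1.symm⟩, h2⟩
        · exact g3 ⟨⟨hmem, h1⟩, h2.symm⟩
        · exact g4 ⟨⟨hmem, h1⟩, h2⟩
      · by_contra hcon
        push_neg at hcon
        have hmem : ω ∈ A := by rw [hAdef]; exact hcon
        rcases eq_or_lt_of_le (hτsge ω) with h1 | h1 <;>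
          rcases eq_or_lt_of_le (hσsge ω) with h2 | h2
        · exact d1 ⟨⟨hmem, h1.symm⟩, h2.symm⟩
        · exact d2 ⟨⟨hmem, h1.symm⟩, h2⟩
        · exact d3 ⟨⟨hmem, h1⟩, h2.symm⟩
        · exact d4 ⟨⟨hmem, h1⟩, h2⟩
end

section
/- Let G and H be progressively measurable integrable processes on [0,T], G right lower semicontinuous and H right-continuous. If for each fixed t ∈ [0,T], G_t ≤ H_t almost surely, then for every stopping time ρ with values in [0,T], G_ρ ≤ H_ρ almost surely. -/
open MeasureTheory Filter Set Topology

/-- Let `G` and `H` be progressively measurable integrable processes on `[0,T]`, with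
`G` right lower semicontinuous and `H` right-continuous.  If for each fixed `t ∈ [0,T]`
we have `G_t ≤ H_t` a.s., then for every stopping time `ρ` with values in `[0,T]`,
`G_ρ ≤ H_ρ` a.s. -/
theorem stmt15 {Ω : Type*} {m0 : MeasurableSpace Ω} (μ : Measure Ω) [IsProbabilityMeasure μ]
    (ℱ : Filtration ℝ m0) (T : ℝ) (hT : 0 ≤ T)
    (G H : ℝ → Ω → ℝ)
    (hGprog : ProgMeasurable ℱ G) (hHprog : ProgMeasurable ℱ H)
    (hGint : ∀ t, Integrable (G t) μ) (hHint : ∀ t, Integrable (H t) μ)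
    (hGrlsc : ∀ ω t, LowerSemicontinuousWithinAt (fun s => G s ω) (Set.Ici t) t)
    (hHrc : ∀ ω t, ContinuousWithinAt (fun s => H s ω) (Set.Ici t) t)
    (hle : ∀ t ∈ Set.Icc (0 : ℝ) T, ∀ᵐ ω ∂μ, G t ω ≤ H t ω)
    (ρ : Ω → ℝ) (hρ : IsStoppingTime ℱ (fun ω => (ρ ω : WithTop ℝ))) (hρr : ∀ ω, ρ ω ∈ Set.Icc 0 T) :
    ∀ᵐ ω ∂μ, G (ρ ω) ω ≤ H (ρ ω) ω := by
  have hq : ∀ᵐ ω ∂μ, ∀ q : ℚ, (q : ℝ) ∈ Set.Icc (0:ℝ) T → G q ω ≤ H q ω := by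
    rw [ae_all_iff]
    intro q
    by_cases hqm : (q : ℝ) ∈ Set.Icc (0:ℝ) T
    · filter_upwards [hle q hqm] with ω h _ using h
    · filter_upwards with ω h; exact absurd h hqm
  filter_upwards [hq, hle T ⟨hT, le_refl T⟩] with ω hω hωT
  rcases eq_or_lt_of_le (hρr ω).2 with hTeq | hlt
  · rw [hTeq]; exact hωT
  · by_contra hcon
    push_neg at hcon
    obtain ⟨y, hy1, hy2⟩ := exists_between hcon
    have h1 : ∀ᶠ s in 𝓝[Set.Ici (ρ ω)] (ρ ω), y < G s ω := hGrlsc ω (ρ ω) y hy2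
    have h2 : ∀ᶠ s in 𝓝[Set.Ici (ρ ω)] (ρ ω), H s ω < y :=
      (hHrc ω (ρ ω)).eventually (tendsto_id.eventually_lt_const hy1)
    obtain ⟨u, hu, hsub⟩ := mem_nhdsGE_iff_exists_Ico_subset.mp (h1.and h2)
    obtain ⟨q, hq1, hq2⟩ := exists_rat_btwn (lt_min hu hlt)
    have hqmem : (q : ℝ) ∈ Set.Ico (ρ ω) u := ⟨le_of_lt hq1, lt_of_lt_of_le hq2 (min_le_left _ _)⟩
    have := hsub hqmem
    have hqIcc : (q : ℝ) ∈ Set.Icc (0:ℝ) T :=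
      ⟨le_trans (hρr ω).1 (le_of_lt hq1), le_of_lt (lt_of_lt_of_le hq2 (min_le_right _ _))⟩
    exact absurd (hω q hqIcc) (not_le.mpr (lt_trans this.2 this.1))
end
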